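/- arXiv:1711.09455 — 14 statements merged into one kernel-verified Lean document; each statement's English description precedes it below -/
import Mathlib

section
/- Let H be a real Hilbert space and (T_n) a family of self-maps of H, each satisfying property (P₂), such that F := ⋂_n Fix(T_n) is nonempty. Let (γ_n) be a sequence of positive reals with ∑_{n=0}^∞ γ_n² = ∞, let x ∈ H, and let (x_n) be the proximal-point iteration starting at x. Assume condition (C1) holds and condition (C2) holds for (x_n). Then (x_n) converges weakly to a point of F. -/
open Filter Metric Topology
open scoped RealInnerProductSpace

/-- Property (P₂) for a self-map of a metric space. -/
def PropP2 {X : Type*} [MetricSpace X] (T : X → X) : Prop :=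
  ∀ x y : X, 2 * dist (T x) (T y) ^ 2 ≤
    dist x (T y) ^ 2 + dist y (T x) ^ 2 - dist x (T x) ^ 2 - dist y (T y) ^ 2

section aux
variable {H : Type*} [NormedAddCommGroup H] [InnerProductSpace ℝ H]

lemma p2_inner {T : H → H} (h : PropP2 T) (x y : H) :
    ‖T x - T y‖ ^ 2 ≤ ⟪x - y, T x - T y⟫ := by
  have h0 := h x y
  simp only [dist_eq_norm] at h0
  have h1 : ‖x - T y‖ ^ 2 = ‖x - T x‖ ^ 2 + 2 * ⟪x - T x, T x - T y⟫ + ‖T x - T y‖ ^ 2 := by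
    rw [show x - T y = (x - T x) + (T x - T y) by abel]
    exact norm_add_sq_real _ _
  have h2 : ‖y - T x‖ ^ 2 = ‖y - T y‖ ^ 2 - 2 * ⟪y - T y, T x - T y⟫ + ‖T x - T y‖ ^ 2 := by
    rw [show y - T x = (y - T y) - (T x - T y) by abel]
    exact norm_sub_sq_real _ _
  have h3 : ⟪x - y, T x - T y⟫
      = ⟪x - T x, T x - T y⟫ - ⟪y - T y, T x - T y⟫ + ‖T x - T y‖ ^ 2 := by
    rw [show x - y = (x - T x) - (y - T y) + (T x - T y) by abel, inner_add_left,
      inner_sub_left, real_inner_self_eq_norm_sq]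
  linarith

lemma p2_nonexpansive {T : H → H} (h : PropP2 T) (x y : H) :
    dist (T x) (T y) ≤ dist x y := by
  have h1 := p2_inner h x y
  have h2 : ⟪x - y, T x - T y⟫ ≤ ‖x - y‖ * ‖T x - T y‖ := real_inner_le_norm _ _
  simp only [dist_eq_norm]
  rcases eq_or_lt_of_le (norm_nonneg (T x - T y)) with h3 | h3
  · rw [← h3]; exact norm_nonneg _
  · nlinarith

omit [InnerProductSpace ℝ H] in
lemma p2_fejer {T : H → H} (h : PropP2 T) {q : H} (hq : T q = q) (z : H) :
    dist (T z) q ^ 2 + dist z (T z) ^ 2 ≤ dist z q ^ 2 := by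
  have h0 := h z q
  rw [hq, dist_self, dist_comm q (T z)] at h0
  nlinarith [dist_nonneg (x := T z) (y := q)]

variable [CompleteSpace H]

lemma eval_swap (f ψ : StrongDual ℝ H) :
    ψ ((InnerProductSpace.toDual ℝ H).symm f) = f ((InnerProductSpace.toDual ℝ H).symm ψ) := by
  conv_lhs => rw [← (InnerProductSpace.toDual ℝ H).apply_symm_apply ψ]
  conv_rhs => rw [← (InnerProductSpace.toDual ℝ H).apply_symm_apply f]
  rw [InnerProductSpace.toDual_apply_apply, InnerProductSpace.toDual_apply_apply, real_inner_comm]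

lemma continuous_phi :
    Continuous (fun f : WeakDual ℝ H =>
      toWeakSpace ℝ H ((InnerProductSpace.toDual ℝ H).symm (WeakDual.toStrongDual f))) := by
  apply WeakBilin.continuous_of_continuous_eval
  intro ψ
  have : (fun f : WeakDual ℝ H =>
      (topDualPairing ℝ H).flip
        (toWeakSpace ℝ H ((InnerProductSpace.toDual ℝ H).symm (WeakDual.toStrongDual f))) ψ)
      = fun f : WeakDual ℝ H => f ((InnerProductSpace.toDual ℝ H).symm ψ) := by
    funext f
    exact eval_swap (WeakDual.toStrongDual f) ψ
  rw [this]
  exact WeakDual.eval_continuous _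

lemma isCompact_weak_ball (c : H) (r : ℝ) :
    IsCompact (toWeakSpace ℝ H '' closedBall c r) := by
  have hcomp : IsCompact (WeakDual.toStrongDual ⁻¹'
      closedBall (InnerProductSpace.toDual ℝ H c) r : Set (WeakDual ℝ H)) :=
    WeakDual.isCompact_closedBall (InnerProductSpace.toDual ℝ H c) r
  have himg := hcomp.image (continuous_phi (H := H))
  convert himg using 1
  ext w
  constructor
  · rintro ⟨z, hz, rfl⟩
    refine ⟨WeakDual.toStrongDual.symm (InnerProductSpace.toDual ℝ H z), ?_, ?_⟩
    · simp only [Set.mem_preimage, LinearEquiv.apply_symm_apply, mem_closedBall]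
      rw [(InnerProductSpace.toDual ℝ H).dist_map]
      exact hz
    · simp
  · rintro ⟨f, hf, rfl⟩
    refine ⟨(InnerProductSpace.toDual ℝ H).symm (WeakDual.toStrongDual f), ?_, rfl⟩
    simp only [Set.mem_preimage, mem_closedBall] at hf
    rw [mem_closedBall]
    have := ((InnerProductSpace.toDual ℝ H).symm.dist_map (WeakDual.toStrongDual f)
      (InnerProductSpace.toDual ℝ H c)).symm
    rw [LinearIsometryEquiv.symm_apply_apply] at this
    rw [this] at hf
    exact hf

lemma continuous_inner_weak (y : H) :
    Continuous (fun v : WeakSpace ℝ H => (⟪(toWeakSpace ℝ H).symm v, y⟫ : ℝ)) := by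
  have : (fun v : WeakSpace ℝ H => (⟪(toWeakSpace ℝ H).symm v, y⟫ : ℝ))
      = fun v : WeakSpace ℝ H => (topDualPairing ℝ H).flip v (InnerProductSpace.toDual ℝ H y) := by
    funext v
    exact real_inner_comm _ _
  rw [this]
  exact WeakBilin.eval_continuous _ _

end aux

theorem stmt0
    {H : Type*} [NormedAddCommGroup H] [InnerProductSpace ℝ H] [CompleteSpace H]
    (T : ℕ → H → H) (hP2 : ∀ n, PropP2 (T n))
    (hF : ∃ q : H, ∀ n, T n q = q)
    (γ : ℕ → ℝ) (hγ : ∀ n, 0 < γ n)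
    (hdiv : Tendsto (fun N => ∑ n ∈ Finset.range N, γ n ^ 2) atTop atTop)
    (x₀ : H) (x : ℕ → H) (hx0 : x 0 = x₀) (hx : ∀ n, x (n + 1) = T n (x n))
    (hC1 : ∀ n m : ℕ, ∀ w : H,
      dist (T n w) (T m w) ≤ (|γ n - γ m| / γ n) * dist w (T n w))
    (hC2 : ∀ n : ℕ,
      dist (x (n + 1)) (x (n + 2)) / γ (n + 1) ≤ dist (x n) (x (n + 1)) / γ n) :
    ∃ p : H, (∀ n, T n p = p) ∧
      Tendsto (fun n => toWeakSpace ℝ H (x n)) atTop (nhds (toWeakSpace ℝ H p)) := by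
  obtain ⟨q₀, hq₀⟩ := hF
  set D : ℕ → ℝ := fun n => dist (x n) (x (n + 1)) with hD
  have hDnn : ∀ n, 0 ≤ D n := fun n => dist_nonneg
  -- Fejér step
  have step : ∀ (q : H), (∀ m, T m q = q) → ∀ n,
      dist (x (n + 1)) q ^ 2 + D n ^ 2 ≤ dist (x n) q ^ 2 := by
    intro q hq n
    have h := p2_fejer (hP2 n) (hq n) (x n)
    simp only [hD]
    rw [hx n]
    exact h
  have anti : ∀ (q : H), (∀ m, T m q = q) → Antitone fun n => dist (x n) q := by
    intro q hq
    apply antitone_nat_of_succ_le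
    intro n
    have h := step q hq n
    nlinarith [dist_nonneg (x := x (n + 1)) (y := q), dist_nonneg (x := x n) (y := q),
      sq_nonneg (D n)]
  set R : ℝ := dist (x 0) q₀ with hR
  have hbound : ∀ n, dist (x n) q₀ ≤ R := fun n => anti q₀ hq₀ (Nat.zero_le n)
  have hsum : ∀ N, ∑ n ∈ Finset.range N, D n ^ 2 ≤ R ^ 2 := by
    intro N
    have key : ∑ n ∈ Finset.range N, D n ^ 2 ≤ dist (x 0) q₀ ^ 2 - dist (x N) q₀ ^ 2 := by
      induction N with
      | zero => simp
      | succ N ih =>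
        rw [Finset.sum_range_succ]
        have := step q₀ hq₀ N
        linarith
    have := sq_nonneg (dist (x N) q₀)
    rw [hR]
    linarith
  have hD0 : Tendsto D atTop (𝓝 0) := by
    have hsumm : Summable (fun n => D n ^ 2) :=
      summable_of_sum_range_le (fun n => sq_nonneg _) hsum
    have h2 := hsumm.tendsto_atTop_zero
    have h3 : Tendsto (fun n => Real.sqrt (D n ^ 2)) atTop (𝓝 (Real.sqrt 0)) :=
      (Real.continuous_sqrt.tendsto 0).comp h2
    have h4 : (fun n => Real.sqrt (D n ^ 2)) = D := funext fun n => Real.sqrt_sq (hDnn n)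
    rw [h4, Real.sqrt_zero] at h3
    exact h3
  set c : ℕ → ℝ := fun n => D n / γ n with hc
  have hcnn : ∀ n, 0 ≤ c n := fun n => div_nonneg (hDnn n) (hγ n).le
  have hcanti : Antitone c := antitone_nat_of_succ_le fun n => hC2 n
  have hγc : ∀ n, γ n * c n = D n := by
    intro n
    rw [hc]
    show γ n * (D n / γ n) = D n
    rw [← mul_div_assoc]
    exact mul_div_cancel_left₀ (D n) (hγ n).ne'
  have hkey : ∀ N, c N ^ 2 * (∑ n ∈ Finset.range N, γ n ^ 2) ≤ R ^ 2 := by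
    intro N
    rw [Finset.mul_sum]
    refine le_trans (Finset.sum_le_sum (fun n hn => ?_)) (hsum N)
    have hn' : n ≤ N := le_of_lt (Finset.mem_range.1 hn)
    have h1 : c N ≤ c n := hcanti hn'
    have h2 : c N ^ 2 ≤ c n ^ 2 := by nlinarith [hcnn N]
    calc c N ^ 2 * γ n ^ 2 ≤ c n ^ 2 * γ n ^ 2 := by nlinarith [sq_nonneg (γ n)]
      _ = (γ n * c n) ^ 2 := by ring
      _ = D n ^ 2 := by rw [hγc n]
  have hc0 : Tendsto c atTop (𝓝 0) := by
    rw [Metric.tendsto_atTop]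
    intro ε hε
    have hev : ∀ᶠ N in atTop, (R ^ 2 + 1) / ε ^ 2 ≤ ∑ n ∈ Finset.range N, γ n ^ 2 :=
      hdiv.eventually_ge_atTop _
    obtain ⟨N₀, hN₀⟩ := eventually_atTop.1 hev
    refine ⟨N₀, fun n hn => ?_⟩
    have hS := hN₀ n hn
    have hk := hkey n
    rw [Real.dist_eq, sub_zero, abs_of_nonneg (hcnn n)]
    by_contra hcon
    push_neg at hcon
    have hε2 : (0 : ℝ) < ε ^ 2 := by positivity
    have hSpos : (0 : ℝ) < ∑ m ∈ Finset.range n, γ m ^ 2 :=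
      lt_of_lt_of_le (by positivity) hS
    rw [div_le_iff₀ hε2] at hS
    have h2 : ε ^ 2 * (∑ m ∈ Finset.range n, γ m ^ 2)
        ≤ c n ^ 2 * (∑ m ∈ Finset.range n, γ m ^ 2) := by
      have : ε ^ 2 ≤ c n ^ 2 := by nlinarith
      exact mul_le_mul_of_nonneg_right this hSpos.le
    nlinarith
  -- residuals tend to zero
  have hres : ∀ m, Tendsto (fun n => dist (x n) (T m (x n))) atTop (𝓝 0) := by
    intro m
    have hub : ∀ n, dist (x n) (T m (x n)) ≤ 2 * D n + γ m * c n := by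
      intro n
      have hDx : dist (x n) (T n (x n)) = D n := by rw [hD]; simp [hx n]
      have h1 : dist (x n) (T m (x n)) ≤ D n + dist (T n (x n)) (T m (x n)) := by
        have := dist_triangle (x n) (T n (x n)) (T m (x n))
        rw [hDx] at this
        exact this
      have h2 := hC1 n m (x n)
      rw [hDx] at h2
      have h3 : |γ n - γ m| ≤ γ n + γ m := by
        have := abs_sub (γ n) (γ m)
        rwa [abs_of_pos (hγ n), abs_of_pos (hγ m)] at this
      have h4 : (|γ n - γ m| / γ n) * D n ≤ ((γ n + γ m) / γ n) * D n :=
        mul_le_mul_of_nonneg_right ((div_le_div_iff_of_pos_right (hγ n)).2 h3) (hDnn n)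
      have h5 : ((γ n + γ m) / γ n) * D n = D n + γ m * c n := by
        show ((γ n + γ m) / γ n) * D n = D n + γ m * (D n / γ n)
        rw [add_div, div_self (hγ n).ne', add_mul, one_mul, div_mul_eq_mul_div, mul_div_assoc]
      linarith
    refine squeeze_zero (fun n => dist_nonneg) hub ?_
    have : Tendsto (fun n => 2 * D n + γ m * c n) atTop (𝓝 (2 * 0 + γ m * 0)) :=
      (hD0.const_mul 2).add (hc0.const_mul (γ m))
    simpa using this
  -- weak topology machinery
  set g : ℕ → WeakSpace ℝ H := fun n => toWeakSpace ℝ H (x n) with hg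
  set K : Set (WeakSpace ℝ H) := toWeakSpace ℝ H '' closedBall q₀ R with hKdef
  have hK : IsCompact K := isCompact_weak_ball q₀ R
  have hmemK : ∀ n, g n ∈ K := fun n => ⟨x n, by simpa [mem_closedBall] using hbound n, rfl⟩
  have hle : map g atTop ≤ 𝓟 K :=
    le_principal_iff.2 (eventually_map.2 (Eventually.of_forall hmemK))
  -- limit filter attached to a cluster point
  have hLfun : ∀ w : WeakSpace ℝ H, ClusterPt w (map g atTop) →
      ∃ L : Filter ℕ, L.NeBot ∧ L ≤ atTop ∧
        ∀ y : H, Tendsto (fun n => (⟪x n, y⟫ : ℝ)) L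
          (𝓝 (⟪(toWeakSpace ℝ H).symm w, y⟫ : ℝ)) := by
    intro w hw
    refine ⟨atTop ⊓ comap g (𝓝 w), ?_, inf_le_left, ?_⟩
    · rw [← map_neBot_iff g, Filter.push_pull, inf_comm]
      exact hw
    · intro y
      have hgw : Tendsto g (atTop ⊓ comap g (𝓝 w)) (𝓝 w) :=
        tendsto_comap.mono_left inf_le_right
      have := ((continuous_inner_weak (H := H) y).tendsto w).comp hgw
      simpa [hg, Function.comp_def, LinearEquiv.symm_apply_apply] using this
  have hCbd : ∀ p : H, ∃ C : ℝ, ∀ n, dist (x n) p ≤ C :=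
    fun p => ⟨R + dist q₀ p, fun n => (dist_triangle _ _ _).trans (by linarith [hbound n])⟩
  -- demiclosedness: every weak cluster point is a common fixed point
  have hfixw : ∀ w : WeakSpace ℝ H, ClusterPt w (map g atTop) →
      ∀ m, T m ((toWeakSpace ℝ H).symm w) = (toWeakSpace ℝ H).symm w := by
    intro w hw m
    obtain ⟨L, hLne, hLle, hLy⟩ := hLfun w hw
    haveI := hLne
    set p : H := (toWeakSpace ℝ H).symm w with hp
    obtain ⟨C, hC⟩ := hCbd p
    set v : H := p - T m p with hv
    have hpt : ∀ n, 2 * (⟪x n, v⟫ : ℝ) - 2 * (⟪p, v⟫ : ℝ) + ‖v‖ ^ 2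
        ≤ dist (x n) (T m (x n)) * dist (x n) (T m (x n))
          + 2 * C * dist (x n) (T m (x n)) := by
      intro n
      have e1 : ‖x n - T m p‖ ^ 2 = ‖x n - p‖ ^ 2 + 2 * (⟪x n - p, v⟫ : ℝ) + ‖v‖ ^ 2 := by
        rw [show x n - T m p = (x n - p) + v by rw [hv]; abel]
        exact norm_add_sq_real _ _
      have e2 : dist (x n) (T m p) ≤ dist (x n) (T m (x n)) + dist (x n) p := by
        have t1 := dist_triangle (x n) (T m (x n)) (T m p)
        have t2 := p2_nonexpansive (hP2 m) (x n) p
        linarith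
      have e2' : dist (x n) (T m p) ^ 2
          ≤ (dist (x n) (T m (x n)) + dist (x n) p) ^ 2 := by
        have hnn : (0 : ℝ) ≤ dist (x n) (T m p) := dist_nonneg
        nlinarith [dist_nonneg (x := x n) (y := T m (x n)), dist_nonneg (x := x n) (y := p)]
      rw [dist_eq_norm (x n) (T m p)] at e2'
      have e3 : (⟪x n - p, v⟫ : ℝ) = (⟪x n, v⟫ : ℝ) - (⟪p, v⟫ : ℝ) := inner_sub_left _ _ _
      have hCn : ‖x n - p‖ ≤ C := by rw [← dist_eq_norm]; exact hC n
      have hdn : (0 : ℝ) ≤ dist (x n) (T m (x n)) := dist_nonneg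
      have hds : dist (x n) (T m (x n)) * ‖x n - p‖ ≤ dist (x n) (T m (x n)) * C :=
        mul_le_mul_of_nonneg_left hCn hdn
      rw [dist_eq_norm (x n) p] at e2'
      nlinarith
    have hlhs : Tendsto (fun n => 2 * (⟪x n, v⟫ : ℝ) - 2 * (⟪p, v⟫ : ℝ) + ‖v‖ ^ 2) L
        (𝓝 (2 * (⟪p, v⟫ : ℝ) - 2 * (⟪p, v⟫ : ℝ) + ‖v‖ ^ 2)) := by
      exact (((hLy v).const_mul 2).sub_const _).add_const _
    have hdL : Tendsto (fun n => dist (x n) (T m (x n))) L (𝓝 0) := (hres m).mono_left hLle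
    have hrhs : Tendsto (fun n => dist (x n) (T m (x n)) * dist (x n) (T m (x n))
        + 2 * C * dist (x n) (T m (x n))) L (𝓝 (0 * 0 + 2 * C * 0)) :=
      (hdL.mul hdL).add (hdL.const_mul (2 * C))
    have hfin := le_of_tendsto_of_tendsto' hlhs hrhs hpt
    have hv2 : ‖v‖ ^ 2 ≤ 0 := by linarith [hfin]
    have hv0 : v = 0 := by
      have : ‖v‖ ^ 2 = 0 := le_antisymm hv2 (sq_nonneg _)
      have : ‖v‖ = 0 := by nlinarith [norm_nonneg v]
      exact norm_eq_zero.1 this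
    rw [hv, sub_eq_zero] at hv0
    exact hv0.symm
  -- existence of a cluster point
  obtain ⟨w, hwK, hw⟩ := hK.exists_clusterPt hle
  set p : H := (toWeakSpace ℝ H).symm w with hp
  have hfix : ∀ m, T m p = p := hfixw w hw
  -- uniqueness of cluster points
  have huniq : ∀ w', ClusterPt w' (map g atTop) → w' = w := by
    intro w' hw'
    set p' : H := (toWeakSpace ℝ H).symm w' with hp'
    have hfix' : ∀ m, T m p' = p' := hfixw w' hw'
    have hconv : ∀ q : H, (∀ m, T m q = q) →
        ∃ a : ℝ, Tendsto (fun n => dist (x n) q) atTop (𝓝 a) := by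
      intro q hq
      refine ⟨_, tendsto_atTop_ciInf (anti q hq) ⟨0, ?_⟩⟩
      rintro r ⟨n, rfl⟩
      exact dist_nonneg
    obtain ⟨a, ha⟩ := hconv p hfix
    obtain ⟨b, hb⟩ := hconv p' hfix'
    have hformula : ∀ n, (⟪x n, p - p'⟫ : ℝ)
        = (dist (x n) p' ^ 2 - dist (x n) p ^ 2 - ‖p'‖ ^ 2 + ‖p‖ ^ 2) / 2 := by
      intro n
      rw [dist_eq_norm, dist_eq_norm, norm_sub_sq_real, norm_sub_sq_real, inner_sub_right]
      ring
    have hinner : Tendsto (fun n => (⟪x n, p - p'⟫ : ℝ)) atTop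
        (𝓝 ((b ^ 2 - a ^ 2 - ‖p'‖ ^ 2 + ‖p‖ ^ 2) / 2)) := by
      have h1 : Tendsto
          (fun n => (dist (x n) p' ^ 2 - dist (x n) p ^ 2 - ‖p'‖ ^ 2 + ‖p‖ ^ 2) / 2) atTop
          (𝓝 ((b ^ 2 - a ^ 2 - ‖p'‖ ^ 2 + ‖p‖ ^ 2) / 2)) :=
        ((((hb.pow 2).sub (ha.pow 2)).sub_const _).add_const _).div_const _
      exact h1.congr fun n => (hformula n).symm
    obtain ⟨L, hLne, hLle, hLy⟩ := hLfun w hw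
    obtain ⟨L', hLne', hLle', hLy'⟩ := hLfun w' hw'
    haveI := hLne
    haveI := hLne'
    have e1 : (⟪p, p - p'⟫ : ℝ) = (b ^ 2 - a ^ 2 - ‖p'‖ ^ 2 + ‖p‖ ^ 2) / 2 :=
      tendsto_nhds_unique (hLy (p - p')) (hinner.mono_left hLle)
    have e2 : (⟪p', p - p'⟫ : ℝ) = (b ^ 2 - a ^ 2 - ‖p'‖ ^ 2 + ‖p‖ ^ 2) / 2 :=
      tendsto_nhds_unique (hLy' (p - p')) (hinner.mono_left hLle')
    have e3 : (⟪p - p', p - p'⟫ : ℝ) = 0 := by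
      rw [inner_sub_left, e1, e2]
      ring
    have e4 : p - p' = 0 := inner_self_eq_zero.1 e3
    have e5 : p = p' := by rwa [sub_eq_zero] at e4
    calc w' = toWeakSpace ℝ H p' := ((toWeakSpace ℝ H).apply_symm_apply w').symm
      _ = toWeakSpace ℝ H p := by rw [e5]
      _ = w := (toWeakSpace ℝ H).apply_symm_apply w
  -- conclude weak convergence
  refine ⟨p, hfix, ?_⟩
  have hwp : toWeakSpace ℝ H p = w := (toWeakSpace ℝ H).apply_symm_apply w
  rw [hwp]
  show Tendsto g atTop (𝓝 w)
  refine le_iff_ultrafilter.2 fun u hu => ?_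
  obtain ⟨aa, haK, hua⟩ := hK.ultrafilter_le_nhds u (hu.trans hle)
  have hca : ClusterPt aa (map g atTop) := neBot_of_le (le_inf hua hu)
  rw [huniq aa hca] at hua
  exact hua
end

section
/- Let H be a real Hilbert space, (γ_n) a sequence of positive reals with ∑_{n=0}^∞ γ_n² = ∞, and (T_n) a family of self-maps of H that is jointly firmly nonexpansive with respect to (γ_n) and satisfies F := ⋂_n Fix(T_n) ≠ ∅. Let x ∈ H and let (x_n) be the proximal-point iteration starting at x. Then (x_n) converges weakly to a point of F. -/
open Filter
open scoped RealInnerProductSpace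

/-- Joint firm nonexpansivity of a family of self-maps of a real Hilbert space
with respect to a sequence of positive reals. -/
def JointlyFirmlyNonexpansive {H : Type*} [NormedAddCommGroup H] [InnerProductSpace ℝ H]
    (T : ℕ → H → H) (γ : ℕ → ℝ) : Prop :=
  ∀ n m : ℕ, ∀ x y : H, ∀ α β : ℝ, α ∈ Set.Icc (0 : ℝ) 1 → β ∈ Set.Icc (0 : ℝ) 1 →
    (1 - α) * γ n = (1 - β) * γ m →
    ‖T n x - T m y‖ ≤ ‖((1 - α) • x + α • T n x) - ((1 - β) • y + β • T m y)‖

/-- The fundamental monotonicity inequality extracted from joint firm nonexpansivity. -/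
lemma jfne_mono {H : Type*} [NormedAddCommGroup H] [InnerProductSpace ℝ H]
    {T : ℕ → H → H} {γ : ℕ → ℝ} (hγ : ∀ n, 0 < γ n)
    (hjfne : JointlyFirmlyNonexpansive T γ) (n m : ℕ) (a b : H) :
    0 ≤ ⟪T n a - T m b, (γ n)⁻¹ • (a - T n a) - (γ m)⁻¹ • (b - T m b)⟫ := by
  set u := T n a with hu
  set v := T m b with hv
  set w := (γ n)⁻¹ • (a - u) - (γ m)⁻¹ • (b - v) with hw
  by_contra hneg
  push_neg at hneg
  set I := ⟪u - v, w⟫ with hI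
  have hI0 : I < 0 := hneg
  set ε := min (γ n) (γ m) with hε
  have hε0 : 0 < ε := lt_min (hγ n) (hγ m)
  set c := min ε (-I / (‖w‖ ^ 2 + 1)) with hc
  have hw1 : (0:ℝ) < ‖w‖ ^ 2 + 1 := by positivity
  have hc0 : 0 < c := lt_min hε0 (div_pos (by linarith) hw1)
  have hcn : c ≤ γ n := le_trans (min_le_left _ _) (min_le_left _ _)
  have hcm : c ≤ γ m := le_trans (min_le_left _ _) (min_le_right _ _)
  have hγn := hγ n
  have hγm := hγ m
  have hα : (1 - c / γ n) ∈ Set.Icc (0:ℝ) 1 := by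
    constructor
    · have : c / γ n ≤ 1 := (div_le_one hγn).2 hcn
      linarith
    · have : 0 < c / γ n := div_pos hc0 hγn
      linarith
  have hβ : (1 - c / γ m) ∈ Set.Icc (0:ℝ) 1 := by
    constructor
    · have : c / γ m ≤ 1 := (div_le_one hγm).2 hcm
      linarith
    · have : 0 < c / γ m := div_pos hc0 hγm
      linarith
  have hcond : (1 - (1 - c / γ n)) * γ n = (1 - (1 - c / γ m)) * γ m := by
    field_simp
    ring
  have hkey := hjfne n m a b _ _ hα hβ hcond
  have hvec : ((1 - (1 - c / γ n)) • a + (1 - c / γ n) • u) -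
      ((1 - (1 - c / γ m)) • b + (1 - c / γ m) • v) = (u - v) + c • w := by
    rw [hw]
    match_scalars <;> field_simp <;> ring
  rw [← hu, ← hv, hvec] at hkey
  have hsq : ‖u - v‖ ^ 2 ≤ ‖(u - v) + c • w‖ ^ 2 := by
    have := norm_nonneg (u - v)
    nlinarith [hkey]
  rw [norm_add_sq_real, real_inner_smul_right, norm_smul, Real.norm_eq_abs,
    abs_of_pos hc0, ← hI] at hsq
  have h2 : 0 ≤ 2 * I + c * ‖w‖ ^ 2 := by
    nlinarith [hsq, hc0]
  have hcle : c ≤ -I / (‖w‖ ^ 2 + 1) := min_le_right _ _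
  have : c * ‖w‖ ^ 2 ≤ -I := by
    calc c * ‖w‖ ^ 2 ≤ (-I / (‖w‖ ^ 2 + 1)) * ‖w‖ ^ 2 := by
          apply mul_le_mul_of_nonneg_right hcle (by positivity)
      _ ≤ -I := by
          rw [div_mul_eq_mul_div, div_le_iff₀ hw1]
          nlinarith [hI0, sq_nonneg ‖w‖]
  linarith

lemma sq_tendsto_zero {f : ℕ → ℝ} (hf : ∀ n, 0 ≤ f n)
    (h : Tendsto (fun n => f n ^ 2) atTop (nhds 0)) : Tendsto f atTop (nhds 0) := by
  have h2 := (Real.continuous_sqrt.tendsto 0).comp h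
  rw [show Real.sqrt 0 = 0 by simp] at h2
  exact h2.congr (fun n => by rw [Function.comp_apply, Real.sqrt_sq_eq_abs, abs_of_nonneg (hf n)])

theorem stmt1
    {H : Type*} [NormedAddCommGroup H] [InnerProductSpace ℝ H] [CompleteSpace H]
    (γ : ℕ → ℝ) (hγ : ∀ n, 0 < γ n)
    (hdiv : Tendsto (fun N => ∑ n ∈ Finset.range N, γ n ^ 2) atTop atTop)
    (T : ℕ → H → H) (hjfne : JointlyFirmlyNonexpansive T γ)
    (hF : ∃ q : H, ∀ n, T n q = q)
    (x₀ : H) (x : ℕ → H) (hx0 : x 0 = x₀) (hx : ∀ n, x (n + 1) = T n (x n)) :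
    ∃ p : H, (∀ n, T n p = p) ∧
      Tendsto (fun n => toWeakSpace ℝ H (x n)) atTop (nhds (toWeakSpace ℝ H p)) := by
  clear hx0
  obtain ⟨q, hq⟩ := hF
  have key := jfne_mono hγ hjfne (T := T)
  -- single step Fejér inequality
  have step : ∀ (n : ℕ) (r : H), T n r = r →
      ‖x (n+1) - r‖ ^ 2 + ‖x (n+1) - x n‖ ^ 2 ≤ ‖x n - r‖ ^ 2 := by
    intro n r hr
    have h := key n n (x n) r
    rw [hr, ← hx n, sub_self, smul_zero, sub_zero, real_inner_smul_right] at h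
    have hinn : 0 ≤ ⟪x (n+1) - r, x n - x (n+1)⟫ :=
      nonneg_of_mul_nonneg_right h (inv_pos.mpr (hγ n))
    have hexp : ‖x n - r‖ ^ 2 =
        ‖x (n+1) - r‖ ^ 2 + 2 * ⟪x (n+1) - r, x n - x (n+1)⟫ + ‖x n - x (n+1)‖ ^ 2 := by
      have : x n - r = (x (n+1) - r) + (x n - x (n+1)) := by abel
      rw [this, norm_add_sq_real]
    rw [norm_sub_rev (x (n+1)) (x n)]
    linarith
  -- distances to common fixed points are antitone
  have dmono : ∀ (r : H), (∀ n, T n r = r) → Antitone fun n => ‖x n - r‖ := by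
    intro r hr
    apply antitone_nat_of_succ_le
    intro n
    have := step n r (hr n)
    nlinarith [norm_nonneg (x (n+1) - r), norm_nonneg (x n - r), sq_nonneg ‖x (n+1) - x n‖]
  -- partial sums of squared increments are bounded
  have sumsq : ∀ N, ∑ n ∈ Finset.range N, ‖x (n+1) - x n‖ ^ 2 ≤ ‖x 0 - q‖ ^ 2 := by
    intro N
    have h : ∀ N, ∑ n ∈ Finset.range N, ‖x (n+1) - x n‖ ^ 2 + ‖x N - q‖ ^ 2 ≤ ‖x 0 - q‖ ^ 2 := by
      intro N
      induction N with
      | zero => simp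
      | succ N ih =>
        rw [Finset.sum_range_succ]
        have := step N q (hq N)
        linarith
    have := h N
    nlinarith [sq_nonneg ‖x N - q‖]
  have incr_summable : Summable (fun n => ‖x (n+1) - x n‖ ^ 2) :=
    summable_of_sum_range_le (fun n => sq_nonneg _) sumsq
  have incr_null : Tendsto (fun n => x (n+1) - x n) atTop (nhds 0) := by
    rw [tendsto_zero_iff_norm_tendsto_zero]
    exact sq_tendsto_zero (fun n => norm_nonneg _) incr_summable.tendsto_atTop_zero
  -- boundedness
  set B := ‖x 0 - q‖ with hB
  have hdb : ∀ n, ‖x n - q‖ ≤ B := fun n => dmono q hq (Nat.zero_le n)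
  have hbdd : ∀ n, ‖x n‖ ≤ B + ‖q‖ := by
    intro n
    calc ‖x n‖ = ‖(x n - q) + q‖ := by rw [sub_add_cancel]
      _ ≤ ‖x n - q‖ + ‖q‖ := norm_add_le _ _
      _ ≤ B + ‖q‖ := by linarith [hdb n]
  -- the "yosida" sequence
  set y : ℕ → H := fun n => (γ n)⁻¹ • (x n - x (n+1)) with hy
  have hynorm : ∀ n, γ n ^ 2 * ‖y n‖ ^ 2 = ‖x (n+1) - x n‖ ^ 2 := by
    intro n
    rw [hy]
    simp only [norm_smul, norm_inv, Real.norm_eq_abs, abs_of_pos (hγ n), norm_sub_rev (x n)]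
    field_simp
    exact mul_div_cancel_left₀ _ (by have := hγ n; positivity)
  have ymono : ∀ n, ‖y (n+1)‖ ≤ ‖y n‖ := by
    intro n
    have h := key (n+1) n (x (n+1)) (x n)
    rw [← hx (n+1), ← hx n] at h
    have hsub : x (n+1+1) - x (n+1) = (-(γ (n+1))) • y (n+1) := by
      rw [hy]
      simp only [smul_smul]
      rw [show (-(γ (n+1))) * (γ (n+1))⁻¹ = -1 by rw [neg_mul, inv_eq_one_div, mul_one_div, div_self (ne_of_gt (hγ (n+1)))]]
      module
    have h2 : 0 ≤ ⟪(-(γ (n+1))) • y (n+1), y (n+1) - y n⟫ := by rw [← hsub]; exact h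
    rw [real_inner_smul_left] at h2
    have h3 : ⟪y (n+1), y (n+1) - y n⟫ ≤ 0 := by
      by_contra hcon
      push_neg at hcon
      nlinarith [hγ (n+1)]
    rw [inner_sub_right, real_inner_self_eq_norm_sq] at h3
    have h4 : ‖y (n+1)‖ ^ 2 ≤ ⟪y (n+1), y n⟫ := by linarith
    have h5 := real_inner_le_norm (y (n+1)) (y n)
    nlinarith [norm_nonneg (y (n+1)), norm_nonneg (y n)]
  have yanti : Antitone fun n => ‖y n‖ := antitone_nat_of_succ_le ymono
  -- ‖y n‖ → 0
  have ynull : Tendsto (fun n => ‖y n‖) atTop (nhds 0) := by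
    apply sq_tendsto_zero (fun n => norm_nonneg _)
    have hS : ∀ N, (∑ n ∈ Finset.range (N+1), γ n ^ 2) * ‖y N‖ ^ 2 ≤ B ^ 2 := by
      intro N
      rw [Finset.sum_mul]
      calc ∑ n ∈ Finset.range (N+1), γ n ^ 2 * ‖y N‖ ^ 2
          ≤ ∑ n ∈ Finset.range (N+1), γ n ^ 2 * ‖y n‖ ^ 2 := by
            apply Finset.sum_le_sum
            intro n hn
            have hnN : n ≤ N := Nat.lt_succ_iff.mp (Finset.mem_range.mp hn)
            have h' : ‖y N‖ ≤ ‖y n‖ := yanti hnN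
            exact mul_le_mul_of_nonneg_left (pow_le_pow_left₀ (norm_nonneg _) h' 2) (sq_nonneg _)
        _ = ∑ n ∈ Finset.range (N+1), ‖x (n+1) - x n‖ ^ 2 := by
            exact Finset.sum_congr rfl (fun n _ => hynorm n)
        _ ≤ B ^ 2 := sumsq (N+1)
    have hSpos : ∀ N, 0 < ∑ n ∈ Finset.range (N+1), γ n ^ 2 := by
      intro N
      apply Finset.sum_pos (fun n _ => pow_pos (hγ n) 2)
      exact ⟨0, Finset.mem_range.mpr (Nat.succ_pos N)⟩
    have hub : ∀ N, ‖y N‖ ^ 2 ≤ B ^ 2 / ∑ n ∈ Finset.range (N+1), γ n ^ 2 := by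
      intro N
      rw [le_div_iff₀ (hSpos N)]
      calc ‖y N‖ ^ 2 * ∑ n ∈ Finset.range (N+1), γ n ^ 2
          = (∑ n ∈ Finset.range (N+1), γ n ^ 2) * ‖y N‖ ^ 2 := by ring
        _ ≤ B ^ 2 := hS N
    have htend : Tendsto (fun N => B ^ 2 / ∑ n ∈ Finset.range (N+1), γ n ^ 2) atTop (nhds 0) := by
      apply Tendsto.div_atTop tendsto_const_nhds
      exact hdiv.comp (tendsto_add_atTop_nat 1)
    exact squeeze_zero (fun n => sq_nonneg _) hub htend
  -- weak-* machinery
  set D := InnerProductSpace.toDual ℝ H with hD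
  set Φ : H → WeakDual ℝ H := fun z => StrongDual.toWeakDual (D z) with hΦ
  set K : Set (WeakDual ℝ H) := WeakDual.toStrongDual ⁻¹' Metric.closedBall (D q) B with hKdef
  have hKcomp : IsCompact K := WeakDual.isCompact_closedBall (𝕜 := ℝ) (E := H) (D q) B
  have hmemK : ∀ n, Φ (x n) ∈ K := by
    intro n
    simp only [hKdef, Set.mem_preimage, Metric.mem_closedBall]
    have heq : WeakDual.toStrongDual (Φ (x n)) = D (x n) := rfl
    rw [heq, dist_eq_norm, ← map_sub D, D.norm_map]
    exact hdb n
  -- evaluation of weak-* limits against vectors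
  have evalW : ∀ (l : Filter ℕ) (p : H), Tendsto (fun n => Φ (x n)) l (nhds (Φ p)) →
      ∀ z : H, Tendsto (fun n => ⟪x n, z⟫) l (nhds ⟪p, z⟫) := by
    intro l p hlim z
    have h := tendsto_iff_forall_eval_tendsto_topDualPairing.mp hlim z
    exact h
  have evalWshift : ∀ (l : Filter ℕ) (p : H), l ≤ atTop →
      Tendsto (fun n => Φ (x n)) l (nhds (Φ p)) →
      ∀ z : H, Tendsto (fun n => ⟪x (n+1), z⟫) l (nhds ⟪p, z⟫) := by
    intro l p hl hlim z
    have h1 := evalW l p hlim z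
    have h2 : Tendsto (fun n => ⟪x (n+1) - x n, z⟫) atTop (nhds 0) := by
      have h0 := Filter.Tendsto.inner (𝕜 := ℝ) incr_null (tendsto_const_nhds (x := z))
      simpa using h0
    have h3 := h1.add (h2.mono_left hl)
    rw [add_zero] at h3
    refine h3.congr (fun n => ?_)
    rw [inner_sub_left]; ring
  -- any ultrafilter weak limit is a common fixed point
  have fixed_of_lim : ∀ (𝒰 : Ultrafilter ℕ), (𝒰 : Filter ℕ) ≤ atTop → ∀ p : H,
      Tendsto (fun n => Φ (x n)) 𝒰 (nhds (Φ p)) → ∀ m, T m p = p := by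
    intro 𝒰 hU p hlim m
    set u := (γ m)⁻¹ • (p - T m p) with hu
    have hf : ∀ n, 0 ≤ ⟪T m p - x (n+1), u - y n⟫ := by
      intro n
      have h := key m n p (x n)
      rw [← hx n] at h
      exact h
    have h1 : Tendsto (fun n => ⟪x (n+1), u⟫) 𝒰 (nhds ⟪p, u⟫) := evalWshift 𝒰 p hU hlim u
    have h2 : Tendsto (fun n => ⟪T m p - x (n+1), y n⟫) atTop (nhds 0) := by
      apply squeeze_zero_norm (a := fun n => (‖T m p‖ + (B + ‖q‖)) * ‖y n‖)
      · intro n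
        rw [Real.norm_eq_abs]
        calc |⟪T m p - x (n+1), y n⟫| ≤ ‖T m p - x (n+1)‖ * ‖y n‖ := abs_real_inner_le_norm _ _
          _ ≤ (‖T m p‖ + (B + ‖q‖)) * ‖y n‖ := by
              apply mul_le_mul_of_nonneg_right _ (norm_nonneg _)
              calc ‖T m p - x (n+1)‖ ≤ ‖T m p‖ + ‖x (n+1)‖ := norm_sub_le _ _
                _ ≤ _ := by linarith [hbdd (n+1)]
      · simpa using ynull.const_mul (‖T m p‖ + (B + ‖q‖))
    have h3 : Tendsto (fun n => ⟪T m p - x (n+1), u - y n⟫) 𝒰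
        (nhds (⟪T m p, u⟫ - ⟪p, u⟫)) := by
      have hconst : Tendsto (fun _ : ℕ => ⟪T m p, u⟫) 𝒰 (nhds ⟪T m p, u⟫) := tendsto_const_nhds
      have h4 := (hconst.sub h1).sub (h2.mono_left hU)
      rw [sub_zero] at h4
      refine h4.congr (fun n => ?_)
      simp only [inner_sub_left, inner_sub_right]
      try ring
    have hge : 0 ≤ ⟪T m p, u⟫ - ⟪p, u⟫ := ge_of_tendsto h3 (Eventually.of_forall hf)
    have hval : ⟪T m p, u⟫ - ⟪p, u⟫ = -((γ m)⁻¹ * ‖T m p - p‖ ^ 2) := by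
      rw [← inner_sub_left, hu, real_inner_smul_right, ← neg_sub (T m p) p,
        inner_neg_right, real_inner_self_eq_norm_sq]
      ring
    rw [hval] at hge
    have hzero : ‖T m p - p‖ ^ 2 ≤ 0 := by
      have := inv_pos.mpr (hγ m)
      nlinarith
    have : T m p - p = 0 := by
      rw [← norm_le_zero_iff]
      nlinarith [norm_nonneg (T m p - p)]
    exact sub_eq_zero.mp this
  -- uniqueness of weak limits along ultrafilters
  have uniq : ∀ (𝒰 𝒱 : Ultrafilter ℕ), (𝒰 : Filter ℕ) ≤ atTop → (𝒱 : Filter ℕ) ≤ atTop →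
      ∀ p p' : H, Tendsto (fun n => Φ (x n)) 𝒰 (nhds (Φ p)) →
      Tendsto (fun n => Φ (x n)) 𝒱 (nhds (Φ p')) → p = p' := by
    intro 𝒰 𝒱 hU hV p p' hp hp'
    have hpF := fixed_of_lim 𝒰 hU p hp
    have hp'F := fixed_of_lim 𝒱 hV p' hp'
    obtain ⟨a, ha⟩ : ∃ a, Tendsto (fun n => ‖x n - p‖) atTop (nhds a) :=
      ⟨_, tendsto_atTop_ciInf (dmono p hpF) ⟨0, by rintro z ⟨n, rfl⟩; exact norm_nonneg _⟩⟩
    obtain ⟨b, hb⟩ : ∃ b, Tendsto (fun n => ‖x n - p'‖) atTop (nhds b) :=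
      ⟨_, tendsto_atTop_ciInf (dmono p' hp'F) ⟨0, by rintro z ⟨n, rfl⟩; exact norm_nonneg _⟩⟩
    have hinner : Tendsto (fun n => ⟪x n, p - p'⟫) atTop
        (nhds ((‖p‖ ^ 2 - ‖p'‖ ^ 2 - (a ^ 2 - b ^ 2)) / 2)) := by
      have hsq1 : Tendsto (fun n => ‖x n - p‖ ^ 2) atTop (nhds (a ^ 2)) := ha.pow 2
      have hsq2 : Tendsto (fun n => ‖x n - p'‖ ^ 2) atTop (nhds (b ^ 2)) := hb.pow 2
      have h5 := ((tendsto_const_nhds (x := ‖p‖ ^ 2 - ‖p'‖ ^ 2)).sub (hsq1.sub hsq2)).div_const 2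
      refine h5.congr (fun n => ?_)
      rw [inner_sub_right, norm_sub_sq_real, norm_sub_sq_real]
      ring
    have c1 : ⟪p, p - p'⟫ = (‖p‖ ^ 2 - ‖p'‖ ^ 2 - (a ^ 2 - b ^ 2)) / 2 :=
      tendsto_nhds_unique (evalW 𝒰 p hp (p - p')) (hinner.mono_left hU)
    have c2 : ⟪p', p - p'⟫ = (‖p‖ ^ 2 - ‖p'‖ ^ 2 - (a ^ 2 - b ^ 2)) / 2 :=
      tendsto_nhds_unique (evalW 𝒱 p' hp' (p - p')) (hinner.mono_left hV)
    have hzero : ⟪p - p', p - p'⟫ = (0:ℝ) := by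
      rw [inner_sub_left, c1, c2]
      ring
    exact sub_eq_zero.mp (inner_self_eq_zero.mp hzero)
  -- existence of weak limits along ultrafilters
  have exlim : ∀ (𝒰 : Ultrafilter ℕ), (𝒰 : Filter ℕ) ≤ atTop →
      ∃ p : H, Tendsto (fun n => Φ (x n)) 𝒰 (nhds (Φ p)) := by
    intro 𝒰 hU
    obtain ⟨g, hgK, hg⟩ := hKcomp.ultrafilter_le_nhds (𝒰.map (fun n => Φ (x n)))
      (by
        rw [Ultrafilter.coe_map, le_principal_iff, mem_map]
        exact Filter.univ_mem' hmemK)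
    refine ⟨D.symm (WeakDual.toStrongDual g), ?_⟩
    have hΦp : Φ (D.symm (WeakDual.toStrongDual g)) = g := by
      rw [hΦ]
      simp only [LinearIsometryEquiv.apply_symm_apply]
      rfl
    rw [hΦp]
    rwa [Ultrafilter.coe_map] at hg
  -- final assembly
  obtain ⟨𝒰₀, hU₀⟩ : ∃ 𝒰 : Ultrafilter ℕ, (𝒰 : Filter ℕ) ≤ atTop :=
    ⟨Ultrafilter.of atTop, Ultrafilter.of_le _⟩
  obtain ⟨p, hp⟩ := exlim 𝒰₀ hU₀
  refine ⟨p, fixed_of_lim 𝒰₀ hU₀ p hp, ?_⟩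
  have hT : Tendsto (fun n => Φ (x n)) atTop (nhds (Φ p)) := by
    rw [tendsto_iff_ultrafilter]
    intro 𝒱 hV
    obtain ⟨p', hp'⟩ := exlim 𝒱 hV
    rwa [uniq 𝒱 𝒰₀ hV hU₀ p' p hp' hp] at hp'
  have hinj : Function.Injective ((topDualPairing ℝ H).flip) := by
    intro a b h
    have h2 := congrFun (congrArg DFunLike.coe h) (D (a - b))
    simp only [LinearMap.flip_apply, topDualPairing_apply, hD,
      InnerProductSpace.toDual_apply_apply] at h2
    have h3 : ⟪a - b, a - b⟫ = (0:ℝ) := by rw [inner_sub_right, h2, sub_self]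
    exact sub_eq_zero.mp (inner_self_eq_zero.mp h3)
  rw [show (fun n => toWeakSpace ℝ H (x n)) = fun n : ℕ => (toWeakSpace ℝ H (x n) : WeakSpace ℝ H) from rfl]
  refine (WeakBilin.tendsto_iff_forall_eval_tendsto (B := (topDualPairing ℝ H).flip) hinj).mpr ?_
  intro f
  have hev := evalW atTop p hT (D.symm f)
  have hfx : ∀ w : H, f w = ⟪w, D.symm f⟫ := by
    intro w
    rw [hD, real_inner_comm, InnerProductSpace.toDual_symm_apply]
  show Tendsto (fun i => f (x i)) atTop (nhds (f p))
  have hgoal : Tendsto (fun i => f (x i)) atTop (nhds (f p)) := by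
    rw [hfx p]
    exact hev.congr (fun n => (hfx (x n)).symm)
  exact hgoal
end

section
/- Let H be a real Hilbert space, T : H → H a nonexpansive mapping with Fix(T) ≠ ∅, and (γ_n) a sequence of positive reals with ∑_{n=0}^∞ γ_n² = ∞. For each n let R_n : H → H satisfy R_n x = (1/(1+γ_n))·x + (γ_n/(1+γ_n))·T(R_n x) for all x ∈ H. Let x ∈ H and define x₀ := x, x_{n+1} := R_n x_n. Then (x_n) converges weakly to a fixed point of T. -/
open Filter Metric

local notation "⟪" x ", " y "⟫" => @inner ℝ _ _ x y

section Aux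

variable {H : Type*} [NormedAddCommGroup H] [InnerProductSpace ℝ H] [CompleteSpace H]

lemma aux_weak_compact_ball (r : ℝ) :
    IsCompact (toWeakSpace ℝ H '' Metric.closedBall 0 r) := by
  have hcomp : IsCompact (WeakDual.toStrongDual ⁻¹'
      Metric.closedBall (0 : StrongDual ℝ H) r) := WeakDual.isCompact_closedBall (𝕜 := ℝ) 0 r
  set g : WeakDual ℝ H → WeakSpace ℝ H :=
    fun φ => toWeakSpace ℝ H ((InnerProductSpace.toDual ℝ H).symm φ) with hg
  have hgc : Continuous g := by
    apply WeakBilin.continuous_of_continuous_eval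
    intro f
    have h1 : (fun φ : WeakDual ℝ H => ((topDualPairing ℝ H).flip (g φ)) f)
        = fun φ : WeakDual ℝ H => φ ((InnerProductSpace.toDual ℝ H).symm f) := by
      funext φ
      show f ((InnerProductSpace.toDual ℝ H).symm φ) = φ ((InnerProductSpace.toDual ℝ H).symm f)
      rw [← InnerProductSpace.toDual_symm_apply, real_inner_comm]
      exact InnerProductSpace.toDual_symm_apply
    rw [h1]
    exact WeakDual.eval_continuous _
  have himg : toWeakSpace ℝ H '' Metric.closedBall 0 r
      = g '' (WeakDual.toStrongDual ⁻¹' Metric.closedBall 0 r) := by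
    ext z
    constructor
    · rintro ⟨w, hw, rfl⟩
      refine ⟨StrongDual.toWeakDual (InnerProductSpace.toDual ℝ H w), ?_, ?_⟩
      · simpa [Metric.mem_closedBall, dist_zero_right] using
          (by simpa [Metric.mem_closedBall, dist_zero_right] using hw : ‖w‖ ≤ r)
      · simp [hg]; exact (InnerProductSpace.toDual ℝ H).symm_apply_apply w
    · rintro ⟨φ, hφ, rfl⟩
      refine ⟨(InnerProductSpace.toDual ℝ H).symm φ, ?_, rfl⟩
      simp only [Metric.mem_closedBall, dist_zero_right] at hφ ⊢
      exact ((InnerProductSpace.toDual ℝ H).symm.norm_map φ).trans_le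
        (by simpa using hφ : ‖WeakDual.toStrongDual φ‖ ≤ r)
  rw [himg]
  exact hcomp.image hgc

/-- Weak convergence gives convergence of inner products. -/
lemma aux_weak_eval {l : Filter ℕ} {u : ℕ → H} {p : H}
    (h : Tendsto (fun n => toWeakSpace ℝ H (u n)) l (nhds (toWeakSpace ℝ H p))) (y : H) :
    Tendsto (fun n => ⟪y, u n⟫) l (nhds ⟪y, p⟫) := by
  have hc : Continuous fun z : WeakSpace ℝ H =>
      ((topDualPairing ℝ H).flip z) (InnerProductSpace.toDual ℝ H y) :=
    WeakBilin.eval_continuous _ _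
  have := (hc.tendsto _).comp h
  exact this

end Aux

theorem stmt4
    {H : Type*} [NormedAddCommGroup H] [InnerProductSpace ℝ H] [CompleteSpace H]
    (T : H → H) (hT : ∀ x y : H, ‖T x - T y‖ ≤ ‖x - y‖)
    (hFix : ∃ q : H, T q = q)
    (γ : ℕ → ℝ) (hγ : ∀ n, 0 < γ n)
    (hdiv : Tendsto (fun N => ∑ n ∈ Finset.range N, γ n ^ 2) atTop atTop)
    (R : ℕ → H → H)
    (hR : ∀ n, ∀ x : H,
      R n x = (1 / (1 + γ n)) • x + (γ n / (1 + γ n)) • T (R n x))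
    (x₀ : H) (x : ℕ → H) (hx0 : x 0 = x₀) (hx : ∀ n, x (n + 1) = R n (x n)) :
    ∃ p : H, T p = p ∧
      Tendsto (fun n => toWeakSpace ℝ H (x n)) atTop (nhds (toWeakSpace ℝ H p)) := by
  obtain ⟨q, hq⟩ := hFix
  set A : H → H := fun u => u - T u with hA
  -- monotonicity of A = I - T
  have mono : ∀ u v : H, 0 ≤ ⟪u - v, A u - A v⟫ := by
    intro u v
    have h1 : A u - A v = (u - v) - (T u - T v) := by simp only [hA]; abel
    rw [h1, inner_sub_right, real_inner_self_eq_norm_sq]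
    have h2 := real_inner_le_norm (u - v) (T u - T v)
    have h3 := hT u v
    nlinarith [norm_nonneg (u - v)]
  -- key recurrence
  have key : ∀ n, x n = x (n + 1) + γ n • A (x (n + 1)) := by
    intro n
    have hthis := hR n (x n)
    rw [← hx n] at hthis
    set c := γ n with hc
    have hcpos := hγ n
    have h1c : (1 : ℝ) + c ≠ 0 := by positivity
    have h2 := congrArg (fun z : H => (1 + c) • z) hthis
    simp only [smul_add, smul_smul] at h2
    rw [mul_one_div_cancel h1c, one_smul] at h2
    have e2 : (1 + c) * (c / (1 + c)) = c := by field_simp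
    rw [e2] at h2
    have h3 : x n = (1 + c) • x (n + 1) - c • T (x (n + 1)) := by
      rw [h2]; abel
    rw [h3, add_smul, one_smul, hA, smul_sub]
    abel
  -- Fejér inequality
  have fe : ∀ q' : H, T q' = q' → ∀ n,
      ‖x (n + 1) - q'‖ ^ 2 + γ n ^ 2 * ‖A (x (n + 1))‖ ^ 2 ≤ ‖x n - q'‖ ^ 2 := by
    intro q' hq' n
    have kn := key n
    have h1 : x n - q' = (x (n + 1) - q') + γ n • A (x (n + 1)) := by rw [kn]; abel
    have h2 : ‖x n - q'‖ ^ 2 = ‖x (n + 1) - q'‖ ^ 2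
        + 2 * (γ n * ⟪x (n + 1) - q', A (x (n + 1))⟫)
        + γ n ^ 2 * ‖A (x (n + 1))‖ ^ 2 := by
      rw [h1, norm_add_sq_real, real_inner_smul_right, norm_smul, Real.norm_eq_abs,
        abs_of_pos (hγ n), mul_pow]
    have h3 : 0 ≤ ⟪x (n + 1) - q', A (x (n + 1))⟫ := by
      have := mono (x (n + 1)) q'
      have hAq : A q' = 0 := by simp [hA, hq']
      rwa [hAq, sub_zero] at this
    nlinarith [hγ n]
  -- norms to fixed points are antitone
  have anti : ∀ q' : H, T q' = q' → ∀ m n, m ≤ n → ‖x n - q'‖ ≤ ‖x m - q'‖ := by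
    intro q' hq'
    have step : ∀ n, ‖x (n + 1) - q'‖ ≤ ‖x n - q'‖ := by
      intro n
      have h := fe q' hq' n
      have h4 : ‖x (n + 1) - q'‖ ^ 2 ≤ ‖x n - q'‖ ^ 2 := by
        nlinarith [mul_nonneg (sq_nonneg (γ n)) (sq_nonneg ‖A (x (n+1))‖)]
      nlinarith [norm_nonneg (x (n+1) - q'), norm_nonneg (x n - q')]
    intro m n hmn
    exact antitone_nat_of_succ_le (f := fun k => ‖x k - q'‖) step hmn
  -- partial sums bound
  have sumbd : ∀ N, ∑ n ∈ Finset.range N, γ n ^ 2 * ‖A (x (n + 1))‖ ^ 2 + ‖x N - q‖ ^ 2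
      ≤ ‖x 0 - q‖ ^ 2 := by
    intro N
    induction N with
    | zero => simp
    | succ N ih =>
      rw [Finset.sum_range_succ]
      have := fe q hq N
      nlinarith
  -- residual norms antitone
  have rstep : ∀ n, ‖A (x (n + 1))‖ ≤ ‖A (x n)‖ := by
    intro n
    have hm := mono (x n) (x (n + 1))
    have h1 : x n - x (n + 1) = γ n • A (x (n + 1)) := by rw [key n]; abel
    rw [h1, real_inner_smul_left] at hm
    have h2 : 0 ≤ ⟪A (x (n + 1)), A (x n) - A (x (n + 1))⟫ := by
      have hpos := hγ n
      have hco : ⟪A (x n) - A (x (n + 1)), A (x (n + 1))⟫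
          = ⟪A (x (n + 1)), A (x n) - A (x (n + 1))⟫ :=
        real_inner_comm _ _
      nlinarith [hm, hco]
    rw [inner_sub_right, real_inner_self_eq_norm_sq] at h2
    have h3 := real_inner_le_norm (A (x (n + 1))) (A (x n))
    nlinarith [norm_nonneg (A (x (n + 1))), norm_nonneg (A (x n))]
  have ranti : Antitone fun n => ‖A (x n)‖ := antitone_nat_of_succ_le rstep
  -- residual tends to zero
  have rlim : Tendsto (fun n => ‖A (x n)‖) atTop (nhds 0) := by
    have hbdd : BddBelow (Set.range fun n => ‖A (x n)‖) :=
      ⟨0, fun y ⟨n, hn⟩ => hn ▸ norm_nonneg _⟩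
    have hconv := tendsto_atTop_ciInf ranti hbdd
    set L := ⨅ n, ‖A (x n)‖ with hL
    have hL0 : 0 ≤ L := le_ciInf fun n => norm_nonneg _
    have hLle : ∀ n, L ≤ ‖A (x n)‖ := fun n => ciInf_le hbdd n
    rcases eq_or_lt_of_le hL0 with h | h
    · rwa [← h] at hconv
    · exfalso
      set C := ‖x 0 - q‖ ^ 2 with hC
      obtain ⟨N, hN⟩ := (tendsto_atTop.1 hdiv (C / L ^ 2 + 1)).exists
      have hsum : L ^ 2 * ∑ n ∈ Finset.range N, γ n ^ 2 ≤ C := by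
        calc L ^ 2 * ∑ n ∈ Finset.range N, γ n ^ 2
            = ∑ n ∈ Finset.range N, γ n ^ 2 * L ^ 2 := by
              rw [Finset.mul_sum]; congr 1; funext n; ring
          _ ≤ ∑ n ∈ Finset.range N, γ n ^ 2 * ‖A (x (n + 1))‖ ^ 2 := by
              apply Finset.sum_le_sum
              intro n _
              have hle2 : L ^ 2 ≤ ‖A (x (n + 1))‖ ^ 2 := by
                nlinarith [hLle (n + 1)]
              exact mul_le_mul_of_nonneg_left hle2 (sq_nonneg (γ n))
          _ ≤ C := by have := sumbd N; nlinarith [sq_nonneg ‖x N - q‖]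
      have hL2 : 0 < L ^ 2 := by positivity
      have : C / L ^ 2 + 1 ≤ C / L ^ 2 := by
        calc C / L ^ 2 + 1 ≤ ∑ n ∈ Finset.range N, γ n ^ 2 := hN
          _ ≤ C / L ^ 2 := by rw [le_div_iff₀ hL2]; linarith [hsum]
      linarith
  have rlim' : Tendsto (fun n => x n - T (x n)) atTop (nhds 0) := by
    rw [tendsto_zero_iff_norm_tendsto_zero]
    exact rlim
  -- boundedness
  set R0 := ‖x 0 - q‖ + ‖q‖ with hR0
  have bound : ∀ n, ‖x n‖ ≤ R0 := by
    intro n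
    calc ‖x n‖ = ‖(x n - q) + q‖ := by rw [sub_add_cancel]
      _ ≤ ‖x n - q‖ + ‖q‖ := norm_add_le _ _
      _ ≤ ‖x 0 - q‖ + ‖q‖ := by
          have := anti q hq 0 n (Nat.zero_le n); linarith
  set K := toWeakSpace ℝ H '' Metric.closedBall (0 : H) R0 with hK
  have hKcomp : IsCompact K := aux_weak_compact_ball R0
  have hmem : ∀ n, toWeakSpace ℝ H (x n) ∈ K := fun n =>
    ⟨x n, by simpa [Metric.mem_closedBall, dist_zero_right] using bound n, rfl⟩
  -- demiclosedness
  have hdemi : ∀ p : H,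
      MapClusterPt (toWeakSpace ℝ H p) atTop (fun n => toWeakSpace ℝ H (x n)) → T p = p := by
    intro p hcp
    obtain ⟨U, hUle, hUt⟩ := mapClusterPt_iff_ultrafilter.1 hcp
    have hev : ∀ y : H, Tendsto (fun n => ⟪y, x n⟫) U (nhds ⟪y, p⟫) :=
      fun y => aux_weak_eval hUt y
    set M := (R0 + ‖p‖) ^ 2 with hM
    have hball : ∀ n, ‖x n - p‖ ^ 2 ∈ Set.Icc (0 : ℝ) M := by
      intro n
      constructor
      · positivity
      · have h1 : ‖x n - p‖ ≤ R0 + ‖p‖ := by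
          calc ‖x n - p‖ ≤ ‖x n‖ + ‖p‖ := norm_sub_le _ _
            _ ≤ R0 + ‖p‖ := by linarith [bound n]
        nlinarith [norm_nonneg (x n - p)]
    obtain ⟨L0, hL0mem, hL0⟩ : ∃ L0 ∈ Set.Icc (0 : ℝ) M,
        Tendsto (fun n => ‖x n - p‖ ^ 2) U (nhds L0) := by
      have hle : ↑(U.map fun n => ‖x n - p‖ ^ 2) ≤ Filter.principal (Set.Icc (0 : ℝ) M) := by
        rw [le_principal_iff]
        exact Filter.mem_map.2 (Filter.Eventually.of_forall hball)
      obtain ⟨L0, hL0mem, hL0⟩ := (isCompact_Icc (a := (0:ℝ)) (b := M)).ultrafilter_le_nhds _ hle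
      exact ⟨L0, hL0mem, hL0⟩
    have hnorm : Tendsto (fun n => ‖x n - p‖) U (nhds (Real.sqrt L0)) := by
      have h1 := (Real.continuous_sqrt.tendsto L0).comp hL0
      have h2 : (fun n => Real.sqrt (‖x n - p‖ ^ 2)) = fun n => ‖x n - p‖ := by
        funext n; rw [Real.sqrt_sq (norm_nonneg _)]
      rwa [show (Real.sqrt ∘ fun n => ‖x n - p‖ ^ 2) = fun n => Real.sqrt (‖x n - p‖ ^ 2) from rfl,
        h2] at h1
    have hinn : Tendsto (fun n => ⟪p - T p, x n⟫) U (nhds ⟪p - T p, p⟫) := hev _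
    -- limit of ‖x n - T p‖^2 along U
    have expand : ∀ n, ‖x n - T p‖ ^ 2
        = ‖x n - p‖ ^ 2 + 2 * (⟪p - T p, x n⟫ - ⟪p - T p, p⟫) + ‖p - T p‖ ^ 2 := by
      intro n
      have h1 : x n - T p = (x n - p) + (p - T p) := by abel
      rw [h1, norm_add_sq_real, real_inner_comm (p - T p), inner_sub_right]
    have hmid : Tendsto (fun n => ⟪p - T p, x n⟫ - ⟪p - T p, p⟫) U (nhds 0) := by
      have h0 : Tendsto (fun _ : ℕ => ⟪p - T p, p⟫) U (nhds ⟪p - T p, p⟫) :=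
        tendsto_const_nhds
      simpa using hinn.sub h0
    have t1 : Tendsto (fun n => ‖x n - T p‖ ^ 2) U (nhds (L0 + ‖p - T p‖ ^ 2)) := by
      have hk : Tendsto (fun _ : ℕ => ‖p - T p‖ ^ 2) U (nhds (‖p - T p‖ ^ 2)) :=
        tendsto_const_nhds
      have h2 := (hL0.add (hmid.const_mul 2)).add hk
      simp only [expand]
      convert h2 using 2 <;> ring
    have t2 : ∀ n, ‖x n - T p‖ ^ 2 ≤ (‖x n - T (x n)‖ + ‖x n - p‖) ^ 2 := by
      intro n
      have h1 : ‖x n - T p‖ ≤ ‖x n - T (x n)‖ + ‖x n - p‖ := by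
        calc ‖x n - T p‖ = ‖(x n - T (x n)) + (T (x n) - T p)‖ := by
              congr 1; abel
          _ ≤ ‖x n - T (x n)‖ + ‖T (x n) - T p‖ := norm_add_le _ _
          _ ≤ ‖x n - T (x n)‖ + ‖x n - p‖ := by linarith [hT (x n) p]
      nlinarith [norm_nonneg (x n - T p), norm_nonneg (x n - T (x n)), norm_nonneg (x n - p)]
    have t3 : Tendsto (fun n => (‖x n - T (x n)‖ + ‖x n - p‖) ^ 2) U
        (nhds ((0 + Real.sqrt L0) ^ 2)) := by
      have h0 : Tendsto (fun n => ‖x n - T (x n)‖) U (nhds 0) := by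
        have := rlim.mono_left hUle
        simpa [hA] using this
      exact (h0.add hnorm).pow 2
    rw [zero_add, Real.sq_sqrt hL0mem.1] at t3
    have hfin := le_of_tendsto_of_tendsto' t1 t3 t2
    have h5 : ‖p - T p‖ ^ 2 ≤ 0 := by linarith
    have h6 : p - T p = 0 := by
      have := sq_nonneg ‖p - T p‖
      have h7 : ‖p - T p‖ ^ 2 = 0 := le_antisymm h5 this
      rwa [pow_eq_zero_iff (by norm_num), norm_eq_zero] at h7
    have := sub_eq_zero.mp h6
    exact this.symm
  -- uniqueness of weak cluster points
  have huniq : ∀ p p' : H,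
      MapClusterPt (toWeakSpace ℝ H p) atTop (fun n => toWeakSpace ℝ H (x n)) →
      MapClusterPt (toWeakSpace ℝ H p') atTop (fun n => toWeakSpace ℝ H (x n)) → p = p' := by
    intro p p' hcp hcp'
    have hp := hdemi p hcp
    have hp' := hdemi p' hcp'
    have dconv : ∀ w : H, T w = w → ∃ d : ℝ, Tendsto (fun n => ‖x n - w‖) atTop (nhds d) := by
      intro w hw
      have hbdd : BddBelow (Set.range fun n => ‖x n - w‖) :=
        ⟨0, fun y ⟨n, hn⟩ => hn ▸ norm_nonneg _⟩
      exact ⟨_, tendsto_atTop_ciInf (antitone_nat_of_succ_le fun n => anti w hw n (n+1) (Nat.le_succ n)) hbdd⟩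
    obtain ⟨d, hd⟩ := dconv p hp
    obtain ⟨d', hd'⟩ := dconv p' hp'
    set c : ℝ := (d' ^ 2 - d ^ 2 + ‖p‖ ^ 2 - ‖p'‖ ^ 2) / 2 with hc
    have hid : ∀ n, ⟪p - p', x n⟫
        = (‖x n - p'‖ ^ 2 - ‖x n - p‖ ^ 2 + ‖p‖ ^ 2 - ‖p'‖ ^ 2) / 2 := by
      intro n
      have e1 := norm_sub_sq_real (x n) p
      have e2 := norm_sub_sq_real (x n) p'
      have e3 : ⟪p - p', x n⟫ = ⟪x n, p⟫ - ⟪x n, p'⟫ := by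
        rw [inner_sub_left, real_inner_comm p (x n), real_inner_comm p' (x n)]
      rw [e3]; rw [e1, e2] at *; linarith
    have hcc : Tendsto (fun n => ⟪p - p', x n⟫) atTop (nhds c) := by
      have k1 : Tendsto (fun _ : ℕ => ‖p‖ ^ 2) atTop (nhds (‖p‖ ^ 2)) := tendsto_const_nhds
      have k2 : Tendsto (fun _ : ℕ => ‖p'‖ ^ 2) atTop (nhds (‖p'‖ ^ 2)) := tendsto_const_nhds
      have h2 := ((((hd'.pow 2).sub (hd.pow 2)).add k1).sub k2).div_const 2
      simp only [hid]
      convert h2 using 2 <;> ring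
    obtain ⟨U, hUle, hUt⟩ := mapClusterPt_iff_ultrafilter.1 hcp
    obtain ⟨U', hUle', hUt'⟩ := mapClusterPt_iff_ultrafilter.1 hcp'
    have h1 : ⟪p - p', p⟫ = c :=
      tendsto_nhds_unique (aux_weak_eval hUt (p - p')) (hcc.mono_left hUle)
    have h2 : ⟪p - p', p'⟫ = c :=
      tendsto_nhds_unique (aux_weak_eval hUt' (p - p')) (hcc.mono_left hUle')
    have h3 : ⟪p - p', p - p'⟫ = (0 : ℝ) := by
      rw [inner_sub_right]; rw [h1, h2]; ring
    have := inner_self_eq_zero.mp h3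
    exact sub_eq_zero.mp this
  -- existence of a cluster point
  have hFle : Filter.map (fun n => toWeakSpace ℝ H (x n)) atTop ≤ Filter.principal K := by
    rw [le_principal_iff]
    exact Filter.mem_map.2 (Filter.Eventually.of_forall hmem)
  obtain ⟨z, hzK, hzcp⟩ := hKcomp.exists_clusterPt hFle
  obtain ⟨w, hwball, rfl⟩ := hzK
  have hcp : MapClusterPt (toWeakSpace ℝ H w) atTop (fun n => toWeakSpace ℝ H (x n)) := hzcp
  refine ⟨w, hdemi w hcp, ?_⟩
  apply hKcomp.tendsto_nhds_of_unique_mapClusterPt (Filter.Eventually.of_forall hmem)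
  rintro z' ⟨w', -, rfl⟩ hz'cp
  exact congrArg (toWeakSpace ℝ H) (huniq w' w hz'cp hcp)
end

section
/- Let H be a real Hilbert space, A : H → 2^H a monotone set-valued operator possessing at least one zero, and (γ_n) a sequence of positive reals with ∑_{n=0}^∞ γ_n² = ∞. For each n let J_n : H → H be a resolvent of A of order γ_n. Let x ∈ H and define x₀ := x, x_{n+1} := J_n x_n. Then (x_n) converges weakly to a zero of A. -/
open Filter RealInnerProductSpace Topology

theorem stmt5
    {H : Type*} [NormedAddCommGroup H] [InnerProductSpace ℝ H] [CompleteSpace H]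
    (A : H → Set H)
    (hmono : ∀ x y u v : H, u ∈ A x → v ∈ A y → 0 ≤ ⟪x - y, u - v⟫)
    (hzer : ∃ q : H, (0 : H) ∈ A q)
    (γ : ℕ → ℝ) (hγ : ∀ n, 0 < γ n)
    (hdiv : Tendsto (fun N => ∑ n ∈ Finset.range N, γ n ^ 2) atTop atTop)
    (J : ℕ → H → H)
    (hJ : ∀ n, ∀ x : H, (1 / γ n) • (x - J n x) ∈ A (J n x))
    (x₀ : H) (x : ℕ → H) (hx0 : x 0 = x₀) (hx : ∀ n, x (n + 1) = J n (x n)) :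
    ∃ p : H, (0 : H) ∈ A p ∧
      Tendsto (fun n => toWeakSpace ℝ H (x n)) atTop (nhds (toWeakSpace ℝ H p)) := by
  obtain ⟨q, hq⟩ := hzer
  -- the residuals
  set u : ℕ → H := fun n => (1 / γ n) • (x n - x (n + 1)) with hu_def
  have hu : ∀ n, u n ∈ A (x (n + 1)) := by
    intro n
    have := hJ n (x n)
    rw [← hx n] at this
    exact this
  have hΔ : ∀ n, x n - x (n + 1) = γ n • u n := by
    intro n
    rw [hu_def]
    simp only [smul_smul]
    rw [mul_one_div, div_self (hγ n).ne', one_smul]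
  -- key decrease inequality for any zero
  have hkey : ∀ q' : H, (0 : H) ∈ A q' → ∀ n,
      ‖x (n + 1) - q'‖ ^ 2 + ‖x n - x (n + 1)‖ ^ 2 ≤ ‖x n - q'‖ ^ 2 := by
    intro q' hq' n
    have h0 : 0 ≤ ⟪x (n + 1) - q', u n - 0⟫ := hmono _ _ _ _ (hu n) hq'
    rw [sub_zero, hu_def] at h0
    have h1 : 0 ≤ ⟪x (n + 1) - q', x n - x (n + 1)⟫ := by
      rw [real_inner_smul_right] at h0
      have hγpos : 0 < 1 / γ n := one_div_pos.mpr (hγ n)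
      nlinarith [h0]
    have hexp : ‖x n - q'‖ ^ 2 = ‖x (n + 1) - q'‖ ^ 2
        + 2 * ⟪x (n + 1) - q', x n - x (n + 1)⟫ + ‖x n - x (n + 1)‖ ^ 2 := by
      rw [show x n - q' = (x (n + 1) - q') + (x n - x (n + 1)) by abel]
      exact norm_add_sq_real _ _
    linarith
  have hanti : ∀ q' : H, (0 : H) ∈ A q' → Antitone (fun n => ‖x n - q'‖ ^ 2) := by
    intro q' hq'
    apply antitone_nat_of_succ_le
    intro n
    have := hkey q' hq' n
    nlinarith [sq_nonneg ‖x n - x (n + 1)‖]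
  -- limits of ‖x n - q'‖² exist for zeros q'
  have hlim_ex : ∀ q' : H, (0 : H) ∈ A q' →
      ∃ a : ℝ, Tendsto (fun n => ‖x n - q'‖ ^ 2) atTop (𝓝 a) := by
    intro q' hq'
    refine ⟨_, tendsto_atTop_ciInf (hanti q' hq') ⟨0, ?_⟩⟩
    rintro r ⟨n, rfl⟩
    positivity
  -- summability of the squared steps
  have hpartial : ∀ N, ∑ n ∈ Finset.range N, ‖x n - x (n + 1)‖ ^ 2 ≤ ‖x 0 - q‖ ^ 2 := by
    intro N
    have tele : ∑ n ∈ Finset.range N, (‖x n - q‖ ^ 2 - ‖x (n + 1) - q‖ ^ 2)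
        = ‖x 0 - q‖ ^ 2 - ‖x N - q‖ ^ 2 := Finset.sum_range_sub' (fun n => ‖x n - q‖ ^ 2) N
    have hle : ∑ n ∈ Finset.range N, ‖x n - x (n + 1)‖ ^ 2
        ≤ ∑ n ∈ Finset.range N, (‖x n - q‖ ^ 2 - ‖x (n + 1) - q‖ ^ 2) := by
      apply Finset.sum_le_sum
      intro n _
      have := hkey q hq n
      linarith
    have : (0 : ℝ) ≤ ‖x N - q‖ ^ 2 := by positivity
    linarith
  have hsum : Summable (fun n => ‖x n - x (n + 1)‖ ^ 2) :=
    summable_of_sum_range_le (fun n => by positivity) hpartial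
  have hΔ_tend : Tendsto (fun n => x n - x (n + 1)) atTop (𝓝 0) := by
    rw [tendsto_zero_iff_norm_tendsto_zero]
    have h2 : Tendsto (fun n => ‖x n - x (n + 1)‖ ^ 2) atTop (𝓝 0) :=
      hsum.tendsto_atTop_zero
    have := (Real.continuous_sqrt.tendsto 0).comp h2
    simp only [Function.comp_def, Real.sqrt_zero] at this
    convert this using 2 with n
    rw [Real.sqrt_sq (norm_nonneg _)]
  -- norms of residuals are nonincreasing
  have hu_anti : Antitone (fun n => ‖u n‖) := by
    apply antitone_nat_of_succ_le
    intro n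
    have h0 : 0 ≤ ⟪x (n + 2) - x (n + 1), u (n + 1) - u n⟫ :=
      hmono _ _ _ _ (hu (n + 1)) (hu n)
    have hx2 : x (n + 2) - x (n + 1) = -(γ (n + 1) • u (n + 1)) := by
      rw [← hΔ (n + 1)]; abel
    rw [hx2, inner_neg_left, real_inner_smul_left, inner_sub_right] at h0
    have h1 : ⟪u (n + 1), u (n + 1)⟫ ≤ ⟪u (n + 1), u n⟫ := by
      nlinarith [hγ (n + 1)]
    have h2 : ⟪u (n + 1), u n⟫ ≤ ‖u (n + 1)‖ * ‖u n‖ := real_inner_le_norm _ _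
    rw [real_inner_self_eq_norm_sq] at h1
    nlinarith [norm_nonneg (u (n + 1)), norm_nonneg (u n)]
  -- the residuals tend to zero
  have hu_tend : Tendsto u atTop (𝓝 0) := by
    rw [tendsto_zero_iff_norm_tendsto_zero]
    have husq : Tendsto (fun N => ‖u N‖ ^ 2) atTop (𝓝 0) := by
      apply squeeze_zero (fun N => by positivity)
        (g := fun N => ‖x 0 - q‖ ^ 2 / ∑ n ∈ Finset.range (N + 1), γ n ^ 2)
      · intro N
        have hSpos : 0 < ∑ n ∈ Finset.range (N + 1), γ n ^ 2 := by
          apply Finset.sum_pos (fun n _ => pow_pos (hγ n) 2)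
          exact ⟨0, Finset.mem_range.mpr (Nat.succ_pos N)⟩
        rw [le_div_iff₀ hSpos]
        calc ‖u N‖ ^ 2 * ∑ n ∈ Finset.range (N + 1), γ n ^ 2
            = ∑ n ∈ Finset.range (N + 1), γ n ^ 2 * ‖u N‖ ^ 2 := by
              rw [Finset.mul_sum]; exact Finset.sum_congr rfl (fun n _ => mul_comm _ _)
          _ ≤ ∑ n ∈ Finset.range (N + 1), ‖x n - x (n + 1)‖ ^ 2 := by
              apply Finset.sum_le_sum
              intro n hn
              have hn' : n ≤ N := Nat.lt_succ_iff.mp (Finset.mem_range.mp hn)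
              have : ‖u N‖ ≤ ‖u n‖ := hu_anti hn'
              have hnorm : ‖x n - x (n + 1)‖ = γ n * ‖u n‖ := by
                rw [hΔ n, norm_smul, Real.norm_eq_abs, abs_of_pos (hγ n)]
              rw [hnorm]
              have h1 : γ n ^ 2 * ‖u N‖ ^ 2 ≤ γ n ^ 2 * ‖u n‖ ^ 2 := by
                apply mul_le_mul_of_nonneg_left _ (by positivity)
                exact pow_le_pow_left₀ (norm_nonneg _) this 2
              nlinarith [h1]
          _ ≤ ‖x 0 - q‖ ^ 2 := hpartial (N + 1)
      · have : Tendsto (fun N => ∑ n ∈ Finset.range (N + 1), γ n ^ 2) atTop atTop :=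
          hdiv.comp (tendsto_add_atTop_nat 1)
        exact Tendsto.div_atTop tendsto_const_nhds this
    have := (Real.continuous_sqrt.tendsto 0).comp husq
    simp only [Function.comp_def, Real.sqrt_zero] at this
    convert this using 2 with n
    rw [Real.sqrt_sq (norm_nonneg _)]
  -- boundedness
  set R : ℝ := ‖x 0 - q‖ + ‖q‖ with hR
  have hbound : ∀ n, ‖x n‖ ≤ R := by
    intro n
    have h1 : ‖x n - q‖ ^ 2 ≤ ‖x 0 - q‖ ^ 2 := hanti q hq (Nat.zero_le n)
    have h2 : ‖x n - q‖ ≤ ‖x 0 - q‖ := by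
      nlinarith [norm_nonneg (x n - q), norm_nonneg (x 0 - q)]
    calc ‖x n‖ = ‖(x n - q) + q‖ := by rw [sub_add_cancel]
      _ ≤ ‖x n - q‖ + ‖q‖ := norm_add_le _ _
      _ ≤ R := by rw [hR]; linarith
  -- every ultrafilter gives a weak cluster point
  have weakLim : ∀ U : Ultrafilter ℕ, ∃ p' : H,
      ∀ z : H, Tendsto (fun n => ⟪x n, z⟫) (U : Filter ℕ) (𝓝 ⟪p', z⟫) := by
    intro U
    set Y : ℕ → WeakDual ℝ H :=
      fun n => StrongDual.toWeakDual (InnerProductSpace.toDual ℝ H (x n)) with hY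
    have hK : IsCompact (WeakDual.toStrongDual ⁻¹' Metric.closedBall 0 R) :=
      WeakDual.isCompact_closedBall (0 : StrongDual ℝ H) R
    have hmem : ∀ n, Y n ∈ WeakDual.toStrongDual ⁻¹' Metric.closedBall 0 R := by
      intro n
      simp only [Set.mem_preimage, Metric.mem_closedBall, dist_zero_right]
      have h1 : ‖(InnerProductSpace.toDual ℝ H (x n))‖ = ‖x n‖ :=
        (InnerProductSpace.toDual ℝ H).norm_map (x n)
      calc ‖WeakDual.toStrongDual (Y n)‖ = ‖x n‖ := h1
        _ ≤ R := hbound n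
    obtain ⟨φ, hφmem, hφ⟩ := hK.ultrafilter_le_nhds (U.map Y)
      (le_principal_iff.mpr (Filter.mem_map.mpr (Filter.univ_mem' hmem)))
    have hT : Tendsto Y (U : Filter ℕ) (𝓝 φ) := by
      rwa [Ultrafilter.coe_map] at hφ
    set p' : H := (InnerProductSpace.toDual ℝ H).symm (WeakDual.toStrongDual φ) with hp'
    have hpeq : InnerProductSpace.toDual ℝ H p' = WeakDual.toStrongDual φ :=
      LinearIsometryEquiv.apply_symm_apply _ _
    refine ⟨p', fun z => ?_⟩
    have hev : Tendsto (fun n => (Y n) z) (U : Filter ℕ) (𝓝 (φ z)) :=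
      ((WeakDual.eval_continuous z).tendsto φ).comp hT
    have h1 : (fun n => (Y n) z) = fun n => ⟪x n, z⟫ := by
      funext n
      rw [hY]
      exact InnerProductSpace.toDual_apply_apply
    have h2 : ⟪p', z⟫ = φ z := by
      rw [← InnerProductSpace.toDual_apply_apply, hpeq]; rfl
    rw [h1] at hev
    rw [h2]
    exact hev
  -- demiclosedness: weak cluster points along nontrivial filters are zeros
  have zero_of : ∀ L : Filter ℕ, L.NeBot → L ≤ atTop → ∀ p' : H,
      (∀ z : H, Tendsto (fun n => ⟪x n, z⟫) L (𝓝 ⟪p', z⟫)) → (0 : H) ∈ A p' := by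
    intro L hLne hL p' hw
    haveI := hLne
    set w : H := J 0 p' with hw_def
    have hv : (1 / γ 0) • (p' - w) ∈ A w := hJ 0 p'
    set v : H := (1 / γ 0) • (p' - w) with hv_def
    have hpos : ∀ n, 0 ≤ ⟪x (n + 1) - w, u n - v⟫ := fun n => hmono _ _ _ _ (hu n) hv
    have hnu : Tendsto (fun n => ‖u n‖) atTop (𝓝 0) := by
      simpa using hu_tend.norm
    have t1 : Tendsto (fun n => ⟪x (n + 1), u n⟫) atTop (𝓝 0) := by
      have hb : ∀ n, ‖⟪x (n + 1), u n⟫‖ ≤ R * ‖u n‖ := fun n =>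
        le_trans (norm_inner_le_norm _ _)
          (mul_le_mul_of_nonneg_right (hbound _) (norm_nonneg _))
      exact squeeze_zero_norm hb (by simpa using tendsto_const_nhds.mul hnu)
    have t2 : Tendsto (fun n => ⟪w, u n⟫) atTop (𝓝 0) := by
      simpa using tendsto_const_nhds.inner hu_tend
    have t3a : Tendsto (fun n => ⟪x (n + 1) - x n, v⟫) atTop (𝓝 0) := by
      have := Filter.Tendsto.inner (𝕜 := ℝ) hΔ_tend.neg (tendsto_const_nhds (x := v))
      simpa [neg_sub] using this
    have t3 : Tendsto (fun n => ⟪x (n + 1), v⟫) L (𝓝 ⟪p', v⟫) := by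
      have h := (hw v).add (t3a.mono_left hL)
      have heq : (fun n => ⟪x n, v⟫ + ⟪x (n + 1) - x n, v⟫) = fun n => ⟪x (n + 1), v⟫ := by
        funext n
        rw [← inner_add_left, add_sub_cancel]
      rw [heq] at h
      simpa using h
    have glim : Tendsto (fun n => ⟪x (n + 1) - w, u n - v⟫) L
        (𝓝 (((0 - ⟪p', v⟫) - 0) + ⟪w, v⟫)) := by
      have h := (((t1.mono_left hL).sub t3).sub (t2.mono_left hL)).add
        (tendsto_const_nhds (x := ⟪w, v⟫))
      have heq : (fun n => ((⟪x (n + 1), u n⟫ - ⟪x (n + 1), v⟫) - ⟪w, u n⟫) + ⟪w, v⟫)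
          = fun n => ⟪x (n + 1) - w, u n - v⟫ := by
        funext n
        rw [inner_sub_left, inner_sub_right, inner_sub_right]
        ring
      rwa [heq] at h
    have hge : (0 : ℝ) ≤ ((0 - ⟪p', v⟫) - 0) + ⟪w, v⟫ := ge_of_tendsto' glim hpos
    have hcomp : ((0 - ⟪p', v⟫) - (0:ℝ)) + ⟪w, v⟫ = -((1 / γ 0) * ‖p' - w‖ ^ 2) := by
      rw [hv_def, real_inner_smul_right, real_inner_smul_right]
      have h1 : ⟪w, p' - w⟫ - ⟪p', p' - w⟫ = -‖p' - w‖ ^ 2 := by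
        rw [← inner_sub_left, show w - p' = -(p' - w) by abel, inner_neg_left,
          real_inner_self_eq_norm_sq]
      linear_combination (1 / γ 0) * h1
    have h10 : 0 < 1 / γ 0 := one_div_pos.mpr (hγ 0)
    rw [hcomp] at hge
    have hsq : ‖p' - w‖ ^ 2 ≤ 0 := by nlinarith [hge, h10]
    have hn0 : ‖p' - w‖ = 0 := by
      have h2 : ‖p' - w‖ ^ 2 = 0 := le_antisymm hsq (sq_nonneg _)
      exact pow_eq_zero_iff (two_ne_zero) |>.mp h2
    have hpw : p' = w := sub_eq_zero.mp (norm_eq_zero.mp hn0)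
    have hv0 : v = 0 := by
      rw [hv_def, hpw, sub_self, smul_zero]
    rw [hv0] at hv
    rw [hpw]
    exact hv
  -- limits of ⟪x n, p₁ - p₂⟫ exist for zeros p₁, p₂
  have inner_lim : ∀ p₁ p₂ : H, (0 : H) ∈ A p₁ → (0 : H) ∈ A p₂ →
      ∃ t : ℝ, Tendsto (fun n => ⟪x n, p₁ - p₂⟫) atTop (𝓝 t) := by
    intro p₁ p₂ h₁ h₂
    obtain ⟨a₁, ha₁⟩ := hlim_ex p₁ h₁
    obtain ⟨a₂, ha₂⟩ := hlim_ex p₂ h₂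
    refine ⟨(a₂ - a₁ + (‖p₁‖ ^ 2 - ‖p₂‖ ^ 2)) / 2, ?_⟩
    have hrw : ∀ n, ⟪x n, p₁ - p₂⟫
        = ((‖x n - p₂‖ ^ 2 - ‖x n - p₁‖ ^ 2) + (‖p₁‖ ^ 2 - ‖p₂‖ ^ 2)) / 2 := by
      intro n
      rw [norm_sub_sq_real, norm_sub_sq_real, inner_sub_right]
      ring
    simp only [hrw]
    exact ((ha₂.sub ha₁).add tendsto_const_nhds).div_const 2
  -- the weak limit point
  obtain ⟨U₀, hU₀⟩ := Filter.exists_ultrafilter_le (atTop : Filter ℕ)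
  obtain ⟨p, hp⟩ := weakLim U₀
  have hp0 : (0 : H) ∈ A p := zero_of U₀ U₀.neBot hU₀ p hp
  refine ⟨p, hp0, ?_⟩
  have hinj : Function.Injective ((topDualPairing ℝ H).flip) := by
    intro a b hab
    have h := congrArg (fun f => f (InnerProductSpace.toDual ℝ H (a - b))) hab
    simp only [LinearMap.flip_apply, topDualPairing_apply, InnerProductSpace.toDual_apply_apply] at h
    have h3 : ⟪a - b, a - b⟫ = 0 := by rw [inner_sub_right]; rw [h]; ring
    exact sub_eq_zero.mp (inner_self_eq_zero.mp h3)
  refine (WeakBilin.tendsto_iff_forall_eval_tendsto (f := fun n => toWeakSpace ℝ H (x n)) (x := toWeakSpace ℝ H p) _ hinj).mpr ?_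
  intro l
  show Tendsto (fun n => l (x n)) atTop (𝓝 (l p))
  set z := (InnerProductSpace.toDual ℝ H).symm l with hz
  have hlz : ∀ w : H, l w = ⟪z, w⟫ := by
    intro w
    rw [hz, ← InnerProductSpace.toDual_apply_apply, LinearIsometryEquiv.apply_symm_apply]
  simp only [hlz]
  rw [tendsto_iff_ultrafilter]
  intro U hU
  obtain ⟨p'', hp''⟩ := weakLim U
  have hp''0 : (0 : H) ∈ A p'' := zero_of U U.neBot hU p'' hp''
  obtain ⟨t, ht⟩ := inner_lim p p'' hp0 hp''0
  have e1 : ⟪p, p - p''⟫ = t := tendsto_nhds_unique (hp (p - p'')) (ht.mono_left hU₀)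
  have e2 : ⟪p'', p - p''⟫ = t := tendsto_nhds_unique (hp'' (p - p'')) (ht.mono_left hU)
  have hpe : p = p'' := by
    have h3 : ⟪p - p'', p - p''⟫ = 0 := by rw [inner_sub_left]; linarith
    exact sub_eq_zero.mp (inner_self_eq_zero.mp h3)
  have hfin := hp'' z
  have hflip : (fun n => ⟪z, x n⟫) = fun n => ⟪x n, z⟫ := funext fun n => real_inner_comm _ _
  rw [hflip, show ⟪z, p⟫ = ⟪p'', z⟫ by rw [real_inner_comm, hpe]]
  exact hfin
end

section
/- Let H be a real Hilbert space, A : H → 2^H a monotone set-valued operator, p a zero of A, b ∈ ℕ with b ≥ 1, and C the closed ball of center p and radius b. Let φ : [0,∞) → [0,∞) be nondecreasing with φ(t) = 0 iff t = 0, and assume A is uniformly monotone on C with modulus φ. Let (γ_n) be a sequence of positive reals, θ : ℕ → ℕ a rate of divergence for ∑_{n=0}^∞ γ_n² = ∞, and for each n let J_n : H → H be a resolvent of A of order γ_n. Let x ∈ C and define x₀ := x, x_{n+1} := J_n x_n. Then p is the unique zero of A in C and (x_n) converges strongly to p with rate of convergence Ψ given by Ψ(k) := θ(b²·(⌈2b/φ(1/(k+1))⌉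 + 1)²) + 1. -/
open Filter RealInnerProductSpace

set_option maxHeartbeats 1000000 in
theorem stmt6
    {H : Type*} [NormedAddCommGroup H] [InnerProductSpace ℝ H] [CompleteSpace H]
    (A : H → Set H)
    (hmono : ∀ x y u v : H, u ∈ A x → v ∈ A y → 0 ≤ ⟪x - y, u - v⟫)
    (p : H) (hp : (0 : H) ∈ A p)
    (b : ℕ) (hb : 1 ≤ b) (C : Set H) (hC : C = Metric.closedBall p b)
    (φ : ℝ → ℝ) (hφmono : ∀ s t : ℝ, 0 ≤ s → s ≤ t → φ s ≤ φ t)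
    (hφnonneg : ∀ t : ℝ, 0 ≤ t → 0 ≤ φ t)
    (hφzero : ∀ t : ℝ, 0 ≤ t → (φ t = 0 ↔ t = 0))
    (hunif : ∀ x ∈ C, ∀ y ∈ C, ∀ u v : H, u ∈ A x → v ∈ A y →
      φ ‖x - y‖ ≤ ⟪x - y, u - v⟫)
    (γ : ℕ → ℝ) (hγ : ∀ n, 0 < γ n)
    (θ : ℕ → ℕ) (hθ : ∀ K : ℕ, (K : ℝ) ≤ ∑ n ∈ Finset.range (θ K + 1), γ n ^ 2)
    (J : ℕ → H → H)
    (hJ : ∀ n, ∀ x : H, (1 / γ n) • (x - J n x) ∈ A (J n x))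
    (x₀ : H) (hx₀C : x₀ ∈ C)
    (x : ℕ → H) (hx0 : x 0 = x₀) (hx : ∀ n, x (n + 1) = J n (x n)) :
    (∀ q ∈ C, (0 : H) ∈ A q → q = p) ∧
    (∀ k : ℕ, ∀ n : ℕ,
      θ (b ^ 2 * (⌈(2 * (b : ℝ)) / φ (1 / ((k : ℝ) + 1))⌉₊ + 1) ^ 2) + 1 ≤ n →
      ‖x n - p‖ ≤ 1 / ((k : ℝ) + 1)) := by
  subst hC
  have hB : (1 : ℝ) ≤ (b : ℝ) := by exact_mod_cast hb
  have hpC : p ∈ Metric.closedBall p (b : ℝ) :=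
    Metric.mem_closedBall_self (by linarith)
  -- Step 1: inner product nonneg
  have hinner : ∀ n, 0 ≤ ⟪x (n+1) - p, x n - x (n+1)⟫ := by
    intro n
    have hu : (1 / γ n) • (x n - x (n+1)) ∈ A (x (n+1)) := by
      rw [hx n]; exact hJ n (x n)
    have h0 := hmono (x (n+1)) p _ 0 hu hp
    rw [sub_zero, real_inner_smul_right] at h0
    have hγn : 0 < 1 / γ n := one_div_pos.mpr (hγ n)
    nlinarith [h0, hγn]
  -- Step 2: Fejér monotone
  have hdec : ∀ n, ‖x (n+1) - p‖ ≤ ‖x n - p‖ := by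
    intro n
    have h3 : x n - p = (x (n+1) - p) + (x n - x (n+1)) := by abel
    have key : ‖x (n+1) - p‖^2 ≤ ‖x (n+1) - p‖ * ‖x n - p‖ := by
      have h1 : ⟪x (n+1) - p, x n - p⟫ ≤ ‖x (n+1) - p‖ * ‖x n - p‖ :=
        real_inner_le_norm _ _
      have h2 : ⟪x (n+1) - p, x n - p⟫
          = ⟪x (n+1) - p, x (n+1) - p⟫ + ⟪x (n+1) - p, x n - x (n+1)⟫ := by
        rw [h3, inner_add_right]
      have h4 := real_inner_self_eq_norm_sq (x (n+1) - p)
      nlinarith [hinner n]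
    nlinarith [norm_nonneg (x (n+1) - p), norm_nonneg (x n - p), key]
  have hant : Antitone (fun n => ‖x n - p‖) := antitone_nat_of_succ_le hdec
  -- Step 3: stay in ball
  have hbound : ∀ n, ‖x n - p‖ ≤ (b : ℝ) := by
    intro n
    induction n with
    | zero =>
        rw [hx0]
        simpa [Metric.mem_closedBall, dist_eq_norm] using hx₀C
    | succ n ih => exact (hdec n).trans ih
  have hxC : ∀ n, x n ∈ Metric.closedBall p (b : ℝ) := by
    intro n; simpa [Metric.mem_closedBall, dist_eq_norm] using hbound n
  constructor
  · -- uniqueness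
    intro q hq hq0
    have h1 := hunif q hq p hpC 0 0 hq0 hp
    rw [sub_zero, inner_zero_right] at h1
    have h2 := hφnonneg ‖q - p‖ (norm_nonneg _)
    have h3 : φ ‖q - p‖ = 0 := le_antisymm h1 h2
    have h4 := (hφzero ‖q - p‖ (norm_nonneg _)).mp h3
    rwa [norm_eq_zero, sub_eq_zero] at h4
  · intro k n hn
    set ε : ℝ := 1 / ((k : ℝ) + 1) with hεdef
    have hε : 0 < ε := by rw [hεdef]; positivity
    clear_value ε
    have hφε : 0 < φ ε := by
      rcases lt_or_eq_of_le (hφnonneg ε hε.le) with h | h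
      · exact h
      · exfalso
        have := (hφzero ε hε.le).mp h.symm
        linarith
    set M : ℕ := ⌈(2 * (b : ℝ)) / φ ε⌉₊ with hMdef
    set K : ℕ := b ^ 2 * (M + 1) ^ 2 with hKdef
    set N : ℕ := θ K + 1 with hNdef
    have hKθ : (K : ℝ) ≤ ∑ m ∈ Finset.range N, γ m ^ 2 := hθ K
    clear_value M K N
    -- claim: some m ≤ N has norm ≤ ε
    have claim : ∃ m ≤ N, ‖x m - p‖ ≤ ε := by
      by_contra hcon
      push_neg at hcon
      have hstep : ∀ m < N, γ m ^ 2 * φ ε ^ 2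
          ≤ (‖x m - p‖ ^ 2 - ‖x (m+1) - p‖ ^ 2) * (b : ℝ) ^ 2 := by
        intro m hm
        have hεlt : ε < ‖x (m+1) - p‖ := hcon (m+1) hm
        have hu : (1 / γ m) • (x m - x (m+1)) ∈ A (x (m+1)) := by
          rw [hx m]; exact hJ m (x m)
        have h1 := hunif (x (m+1)) (hxC (m+1)) p hpC _ 0 hu hp
        rw [sub_zero, real_inner_smul_right] at h1
        have h2 : φ ε ≤ φ ‖x (m+1) - p‖ := hφmono ε _ hε.le hεlt.le
        have hcs : ⟪x (m+1) - p, x m - x (m+1)⟫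
            ≤ ‖x (m+1) - p‖ * ‖x m - x (m+1)‖ := real_inner_le_norm _ _
        have hγm := hγ m
        have h7 : γ m * φ ‖x (m+1) - p‖ ≤ ⟪x (m+1) - p, x m - x (m+1)⟫ := by
          have h := mul_le_mul_of_nonneg_left h1 hγm.le
          have heq : γ m * (1 / γ m * ⟪x (m+1) - p, x m - x (m+1)⟫)
              = ⟪x (m+1) - p, x m - x (m+1)⟫ := by
            field_simp
          linarith [h, heq.le, heq.ge]
        have h5 : γ m * φ ε ≤ (b : ℝ) * ‖x m - x (m+1)‖ := by
          have h6 : γ m * φ ε ≤ γ m * φ ‖x (m+1) - p‖ :=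
            mul_le_mul_of_nonneg_left h2 hγm.le
          have h8 : ‖x (m+1) - p‖ * ‖x m - x (m+1)‖ ≤ (b : ℝ) * ‖x m - x (m+1)‖ :=
            mul_le_mul_of_nonneg_right (hbound (m+1)) (norm_nonneg _)
          linarith
        have h9 : x m - p = (x (m+1) - p) + (x m - x (m+1)) := by abel
        have h10 : ‖x m - p‖ ^ 2 = ‖x (m+1) - p‖ ^ 2
            + 2 * ⟪x (m+1) - p, x m - x (m+1)⟫ + ‖x m - x (m+1)‖ ^ 2 := by
          rw [h9]; exact norm_add_sq_real _ _
        have h11 : ‖x m - x (m+1)‖ ^ 2 ≤ ‖x m - p‖ ^ 2 - ‖x (m+1) - p‖ ^ 2 := by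
          nlinarith [hinner m]
        have hbpos : (0:ℝ) < (b:ℝ) := by linarith
        have hsq := mul_self_le_mul_self (mul_nonneg hγm.le hφε.le) h5
        have h12 : γ m ^ 2 * φ ε ^ 2 ≤ ‖x m - x (m+1)‖ ^ 2 * (b:ℝ) ^ 2 := by
          nlinarith [hsq]
        nlinarith [h12, h11, sq_nonneg ((b:ℝ))]
      -- sum up
      have hbpos : (0:ℝ) < (b:ℝ) := by linarith
      have hsum : φ ε ^ 2 * ∑ m ∈ Finset.range N, γ m ^ 2
          ≤ (‖x 0 - p‖ ^ 2 - ‖x N - p‖ ^ 2) * (b:ℝ)^2 := by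
        have htel := Finset.sum_range_sub' (fun m => ‖x m - p‖ ^ 2) N
        have : φ ε ^ 2 * ∑ m ∈ Finset.range N, γ m ^ 2
            ≤ ∑ m ∈ Finset.range N, (‖x m - p‖ ^ 2 - ‖x (m+1) - p‖ ^ 2) * (b:ℝ)^2 := by
          rw [Finset.mul_sum]
          apply Finset.sum_le_sum
          intro m hm
          have := hstep m (Finset.mem_range.mp hm)
          linarith [this]
        rw [← Finset.sum_mul, htel] at this
        exact this
      have hK : (K : ℝ) ≤ ∑ m ∈ Finset.range N, γ m ^ 2 := hKθ
      have hd0 : ‖x 0 - p‖ ^ 2 ≤ (b:ℝ)^2 := by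
        have := hbound 0
        nlinarith [norm_nonneg (x 0 - p)]
      have hdN : 0 ≤ ‖x N - p‖ ^ 2 := sq_nonneg _
      have hK2 : φ ε ^ 2 * (K:ℝ) ≤ (b:ℝ)^2 * (b:ℝ)^2 := by
        have h1 : φ ε ^ 2 * (K:ℝ) ≤ φ ε ^ 2 * ∑ m ∈ Finset.range N, γ m ^ 2 :=
          mul_le_mul_of_nonneg_left hK (by positivity)
        nlinarith [hsum, hd0, hdN, sq_nonneg ((b:ℝ))]
      have hKreal : (K:ℝ) = (b:ℝ)^2 * ((M:ℝ)+1)^2 := by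
        rw [hKdef]; push_cast; ring
      have hMb : 2 * (b : ℝ) ≤ (M:ℝ) * φ ε := by
        rw [hMdef]; exact (div_le_iff₀ hφε).mp (Nat.le_ceil _)
      have hMb' : 2 * (b : ℝ) ≤ ((M:ℝ)+1) * φ ε := by nlinarith [hφε.le]
      have hsq := mul_self_le_mul_self (by positivity : (0:ℝ) ≤ 2 * (b:ℝ)) hMb'
      have s1 : 4 * (b:ℝ)^2 ≤ ((M:ℝ)+1)^2 * φ ε ^ 2 := by nlinarith [hsq]
      have s2 : 4 * (b:ℝ)^2 * (b:ℝ)^2 ≤ φ ε ^ 2 * (K:ℝ) := by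
        rw [hKreal]
        nlinarith [s1, sq_nonneg ((b:ℝ))]
      have hb2 : (1:ℝ) ≤ (b:ℝ)^2 := by nlinarith
      have hb4 : (1:ℝ) ≤ (b:ℝ)^2 * (b:ℝ)^2 := by nlinarith [hb2]
      linarith [s2, hK2, hb4]
    obtain ⟨m, hmN, hm⟩ := claim
    have : ‖x n - p‖ ≤ ‖x m - p‖ := hant (le_trans hmN hn)
    linarith
end

section
/- Let (X,d) be a metric space, (T_n) a family of self-maps of X each satisfying property (P₂) and having a common fixed point, and (γ_n) a sequence of positive reals with ∑_{n=0}^∞ γ_n² = ∞. Let x ∈ X, let (x_n) be the proximal-point iteration starting at x, and assume condition (C2) holds for (x_n). Then lim_{n→∞} d(x_n, x_{n+1}) = 0 and lim_{n→∞} d(x_n, x_{n+1})/γ_n = 0. -/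
open Filter

theorem stmt8
    {X : Type*} [MetricSpace X]
    (T : ℕ → X → X) (hP2 : ∀ n, PropP2 (T n))
    (hF : ∃ q : X, ∀ n, T n q = q)
    (γ : ℕ → ℝ) (hγ : ∀ n, 0 < γ n)
    (hdiv : Tendsto (fun N => ∑ n ∈ Finset.range N, γ n ^ 2) atTop atTop)
    (x₀ : X) (x : ℕ → X) (hx0 : x 0 = x₀) (hx : ∀ n, x (n + 1) = T n (x n))
    (hC2 : ∀ n : ℕ,
      dist (x (n + 1)) (x (n + 2)) / γ (n + 1) ≤ dist (x n) (x (n + 1)) / γ n) :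
    Tendsto (fun n => dist (x n) (x (n + 1))) atTop (nhds 0) ∧
    Tendsto (fun n => dist (x n) (x (n + 1)) / γ n) atTop (nhds 0) := by
  obtain ⟨q, hq⟩ := hF
  set d : ℕ → ℝ := fun n => dist (x n) (x (n + 1)) with hd
  have dnn : ∀ n, 0 ≤ d n := fun n => dist_nonneg
  have key : ∀ n, d n ^ 2 + dist (x (n + 1)) q ^ 2 ≤ dist (x n) q ^ 2 := by
    intro n
    have h := hP2 n (x n) q
    rw [hq n, ← hx n, dist_self, dist_comm q] at h
    simp only [hd]
    nlinarith [h]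
  have sum_le : ∀ N, ∑ n ∈ Finset.range N, d n ^ 2 + dist (x N) q ^ 2
      ≤ dist (x 0) q ^ 2 := by
    intro N
    induction N with
    | zero => simp
    | succ N ih =>
      rw [Finset.sum_range_succ]
      have := key N
      linarith
  have sum_le' : ∀ N, ∑ n ∈ Finset.range N, d n ^ 2 ≤ dist (x 0) q ^ 2 := by
    intro N
    have := sum_le N
    nlinarith [sq_nonneg (dist (x N) q)]
  have hsum : Summable (fun n => d n ^ 2) :=
    summable_of_sum_range_le (fun n => sq_nonneg _) sum_le'
  have hsq0 : Tendsto (fun n => d n ^ 2) atTop (nhds 0) := hsum.tendsto_atTop_zero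
  have hd0 : Tendsto d atTop (nhds 0) := by
    have : Tendsto (fun n => Real.sqrt (d n ^ 2)) atTop (nhds (Real.sqrt 0)) :=
      (Real.continuous_sqrt.continuousAt).tendsto.comp hsq0
    simpa [Real.sqrt_sq (dnn _)] using this
  refine ⟨hd0, ?_⟩
  set c : ℕ → ℝ := fun n => d n / γ n with hc
  have cmono : Antitone c := antitone_nat_of_succ_le fun n => hC2 n
  have cnn : ∀ n, 0 ≤ c n := fun n => div_nonneg (dnn n) (hγ n).le
  have hbdd : BddBelow (Set.range c) := ⟨0, by rintro _ ⟨n, rfl⟩; exact cnn n⟩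
  have hL : Tendsto c atTop (nhds (⨅ n, c n)) :=
    tendsto_atTop_ciInf cmono hbdd
  set L := ⨅ n, c n with hLdef
  have hL0 : 0 ≤ L := le_ciInf cnn
  have hLle : L ≤ 0 := by
    by_contra h
    push_neg at h
    have hLpos : 0 < L := h
    have hγle : ∀ n, γ n ^ 2 ≤ d n ^ 2 / L ^ 2 := by
      intro n
      have h1 : L ≤ c n := ciInf_le hbdd n
      have h2 : L * γ n ≤ d n := (le_div_iff₀ (hγ n)).mp h1
      rw [le_div_iff₀ (by positivity : (0:ℝ) < L ^ 2)]
      nlinarith [h2, mul_pos hLpos (hγ n), (hγ n).le, hLpos.le]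
    have hbound : ∀ N, ∑ n ∈ Finset.range N, γ n ^ 2 ≤ dist (x 0) q ^ 2 / L ^ 2 := by
      intro N
      calc ∑ n ∈ Finset.range N, γ n ^ 2
          ≤ ∑ n ∈ Finset.range N, d n ^ 2 / L ^ 2 :=
            Finset.sum_le_sum fun n _ => hγle n
        _ = (∑ n ∈ Finset.range N, d n ^ 2) / L ^ 2 := by
            rw [Finset.sum_div]
        _ ≤ dist (x 0) q ^ 2 / L ^ 2 := by
            apply div_le_div_of_nonneg_right (sum_le' N) (by positivity)
    obtain ⟨N, hN⟩ := (hdiv.eventually_gt_atTop (dist (x 0) q ^ 2 / L ^ 2)).exists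
    exact absurd (hbound N) (not_le.mpr hN)
  have : L = 0 := le_antisymm hLle hL0
  rw [this] at hL
  exact hL
end

section
/- Let (X,d) be a metric space, (T_n) a family of self-maps of X each satisfying property (P₂) and having a common fixed point, and (γ_n) a sequence of positive reals with ∑_{n=0}^∞ γ_n² = ∞. Let x ∈ X, let (x_n) be the proximal-point iteration starting at x, and assume condition (C1) holds and condition (C2) holds for (x_n). Then for every m ∈ ℕ: lim_{n→∞} d(x_n, T_m x_n) = 0. -/
open Filter

theorem stmt9
    {X : Type*} [MetricSpace X]
    (T : ℕ → X → X) (hP2 : ∀ n, PropP2 (T n))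
    (hF : ∃ q : X, ∀ n, T n q = q)
    (γ : ℕ → ℝ) (hγ : ∀ n, 0 < γ n)
    (hdiv : Tendsto (fun N => ∑ n ∈ Finset.range N, γ n ^ 2) atTop atTop)
    (x₀ : X) (x : ℕ → X) (hx0 : x 0 = x₀) (hx : ∀ n, x (n + 1) = T n (x n))
    (hC1 : ∀ n m : ℕ, ∀ w : X,
      dist (T n w) (T m w) ≤ (|γ n - γ m| / γ n) * dist w (T n w))
    (hC2 : ∀ n : ℕ,
      dist (x (n + 1)) (x (n + 2)) / γ (n + 1) ≤ dist (x n) (x (n + 1)) / γ n) :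
    ∀ m : ℕ, Tendsto (fun n => dist (x n) (T m (x n))) atTop (nhds 0) := by
  obtain ⟨q, hq⟩ := hF
  set s : ℕ → ℝ := fun n => dist (x n) (x (n + 1)) with hs_def
  have hs_nonneg : ∀ n, 0 ≤ s n := fun n => dist_nonneg
  have key : ∀ n, dist (x (n + 1)) q ^ 2 + s n ^ 2 ≤ dist (x n) q ^ 2 := by
    intro n
    have h := hP2 n (x n) q
    rw [hq n, dist_comm q (T n (x n)), dist_self] at h
    simp only [hs_def, hx n]
    nlinarith [h]
  have hpartial : ∀ N, ∑ n ∈ Finset.range N, s n ^ 2 + dist (x N) q ^ 2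
      ≤ dist (x 0) q ^ 2 := by
    intro N
    induction N with
    | zero => simp
    | succ N ih =>
      rw [Finset.sum_range_succ]
      linarith [key N]
  have hsumS : Summable (fun n => s n ^ 2) := by
    apply summable_of_sum_range_le (c := dist (x 0) q ^ 2) (fun n => sq_nonneg _)
    intro N
    have h := hpartial N
    nlinarith [sq_nonneg (dist (x N) q)]
  have hs2 : Tendsto (fun n => s n ^ 2) atTop (nhds 0) := hsumS.tendsto_atTop_zero
  have hs0 : Tendsto s atTop (nhds 0) := by
    have h1 : Tendsto (fun n => Real.sqrt (s n ^ 2)) atTop (nhds (Real.sqrt 0)) :=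
      (Real.continuous_sqrt.tendsto 0).comp hs2
    rw [Real.sqrt_zero] at h1
    have heq : (fun n => Real.sqrt (s n ^ 2)) = s :=
      funext fun n => Real.sqrt_sq (hs_nonneg n)
    rwa [heq] at h1
  set c : ℕ → ℝ := fun n => s n / γ n with hc_def
  have hanti : Antitone c := antitone_nat_of_succ_le (fun n => hC2 n)
  have hc_nonneg : ∀ n, 0 ≤ c n := fun n => div_nonneg (hs_nonneg n) (hγ n).le
  have hbdd : BddBelow (Set.range c) := ⟨0, fun y ⟨n, hn⟩ => hn ▸ hc_nonneg n⟩
  have hctend : Tendsto c atTop (nhds (⨅ n, c n)) := tendsto_atTop_ciInf hanti hbdd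
  have hL0 : 0 ≤ ⨅ n, c n := le_ciInf hc_nonneg
  have hLle : (⨅ n, c n) ≤ 0 := by
    by_contra h
    push_neg at h
    set L := ⨅ n, c n with hL_def
    have hLc : ∀ n, L ≤ c n := fun n => ciInf_le hbdd n
    have hb : ∀ n, L ^ 2 * γ n ^ 2 ≤ s n ^ 2 := by
      intro n
      have h1 : L * γ n ≤ s n := (le_div_iff₀ (hγ n)).mp (hLc n)
      nlinarith [mul_pos h (hγ n), hs_nonneg n]
    have hsum2 : Summable (fun n => L ^ 2 * γ n ^ 2) :=
      Summable.of_nonneg_of_le (fun n => by positivity) hb hsumS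
    have hsumγ : Summable (fun n => γ n ^ 2) :=
      (summable_mul_left_iff (pow_ne_zero 2 (ne_of_gt h))).mp hsum2
    exact not_tendsto_nhds_of_tendsto_atTop hdiv _ hsumγ.hasSum.tendsto_sum_nat
  have hLeq : (⨅ n, c n) = 0 := le_antisymm hLle hL0
  rw [hLeq] at hctend
  intro m
  have bound : ∀ n, dist (x n) (T m (x n)) ≤ 2 * s n + γ m * c n := by
    intro n
    have h1 : dist (x n) (T m (x n)) ≤ s n + dist (T n (x n)) (T m (x n)) := by
      have := dist_triangle (x n) (x (n + 1)) (T m (x n))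
      rw [hx n] at this
      simpa [hs_def, hx n] using this
    have h2 : dist (T n (x n)) (T m (x n)) ≤ (|γ n - γ m| / γ n) * s n := by
      simp only [hs_def]
      rw [hx n]
      exact hC1 n m (x n)
    have h3 : |γ n - γ m| ≤ γ n + γ m :=
      abs_le.mpr ⟨by linarith [hγ n, hγ m], by linarith [hγ n, hγ m]⟩
    have h4 : (|γ n - γ m| / γ n) * s n ≤ ((γ n + γ m) / γ n) * s n := by
      gcongr
      exact (hγ n).le
    have h5 : ((γ n + γ m) / γ n) * s n = s n + γ m * (s n / γ n) := by
      rw [add_div, div_self (hγ n).ne', add_mul, one_mul, div_mul_eq_mul_div,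
        mul_div_assoc]
    have : dist (x n) (T m (x n)) ≤ s n + (s n + γ m * (s n / γ n)) := by
      calc dist (x n) (T m (x n)) ≤ s n + dist (T n (x n)) (T m (x n)) := h1
        _ ≤ s n + (|γ n - γ m| / γ n) * s n := by linarith
        _ ≤ s n + ((γ n + γ m) / γ n) * s n := by linarith
        _ = s n + (s n + γ m * (s n / γ n)) := by rw [h5]
    simpa [hc_def, two_mul] using (by linarith : dist (x n) (T m (x n)) ≤ 2 * s n + γ m * (s n / γ n))
  have hlim : Tendsto (fun n => 2 * s n + γ m * c n) atTop (nhds 0) := by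
    have := (hs0.const_mul 2).add (hctend.const_mul (γ m))
    simpa using this
  exact squeeze_zero (fun n => dist_nonneg) bound hlim
end

section
/- Let H be a real Hilbert space and T : H → H a map satisfying property (P₂). Then T is nonexpansive, i.e. ‖Tx − Ty‖ ≤ ‖x − y‖ for all x, y ∈ H. -/
theorem stmt11
    {H : Type*} [NormedAddCommGroup H] [InnerProductSpace ℝ H]
    (T : H → H)
    (hP2 : ∀ x y : H, 2 * ‖T x - T y‖ ^ 2 ≤
      ‖x - T y‖ ^ 2 + ‖y - T x‖ ^ 2 - ‖x - T x‖ ^ 2 - ‖y - T y‖ ^ 2) :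
    ∀ x y : H, ‖T x - T y‖ ≤ ‖x - y‖ := by
  intro x y
  have h := hP2 x y
  have expand : ‖x - T y‖ ^ 2 + ‖y - T x‖ ^ 2 - ‖x - T x‖ ^ 2 - ‖y - T y‖ ^ 2
      = 2 * inner ℝ (x - y) (T x - T y) := by
    simp only [@norm_sub_sq_real, inner_sub_left, inner_sub_right]
    ring
  rw [expand] at h
  have hc : (inner ℝ (x - y) (T x - T y) : ℝ) ≤ ‖x - y‖ * ‖T x - T y‖ :=
    real_inner_le_norm _ _
  have key : ‖T x - T y‖ ^ 2 ≤ ‖x - y‖ * ‖T x - T y‖ := by nlinarith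
  rcases eq_or_lt_of_le (norm_nonneg (T x - T y)) with h0 | h0
  · rw [← h0]; exact norm_nonneg _
  · nlinarith
end

section
/- Let H be a real Hilbert space, (T_n) a family of self-maps of H, and (γ_n) a sequence of positive reals. Then (T_n) is jointly (P₂) with respect to (γ_n) if and only if (T_n) is jointly firmly nonexpansive with respect to (γ_n). -/
open RealInnerProductSpace

/-- The joint (P₂) condition for a family of self-maps of a real Hilbert space
with respect to a sequence of positive reals. -/
def JointlyP2 {H : Type*} [NormedAddCommGroup H] [InnerProductSpace ℝ H]
    (T : ℕ → H → H) (γ : ℕ → ℝ) : Prop :=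
  ∀ n m : ℕ, ∀ x y : H,
    (1 / γ m) * (‖T n x - T m y‖ ^ 2 + ‖y - T m y‖ ^ 2 - ‖y - T n x‖ ^ 2) ≤
    (1 / γ n) * (‖x - T m y‖ ^ 2 - ‖x - T n x‖ ^ 2 - ‖T n x - T m y‖ ^ 2)

lemma core_iff {H : Type*} [NormedAddCommGroup H] [InnerProductSpace ℝ H]
    (γn γm : ℝ) (hn : 0 < γn) (hm : 0 < γm) (u v w : H) :
    ⟪v, w⟫ / γm ≤ ⟪u, w⟫ / γn ↔
    ∀ s t : ℝ, s ∈ Set.Icc (0:ℝ) 1 → t ∈ Set.Icc (0:ℝ) 1 → s * γn = t * γm →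
      ‖w‖ ≤ ‖w + (s • u - t • v)‖ := by
  constructor
  · intro h s t hs ht hst
    refine le_of_pow_le_pow_left₀ two_ne_zero (norm_nonneg _) ?_
    rw [norm_add_sq_real]
    have hw : ⟪w, s • u - t • v⟫ = s * ⟪u, w⟫ - t * ⟪v, w⟫ := by
      rw [inner_sub_right, real_inner_smul_right, real_inner_smul_right,
        real_inner_comm w u, real_inner_comm w v]
    have hs' : s = t * γm / γn := by field_simp; linarith [hst]
    have h1 : ⟪v, w⟫ * γn ≤ ⟪u, w⟫ * γm := by
      rw [div_le_div_iff₀ hm hn] at h; linarith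
    have h2 : 0 ≤ s * ⟪u, w⟫ - t * ⟪v, w⟫ := by
      rw [hs']
      have ht0 : 0 ≤ t := ht.1
      have : t * γm / γn * ⟪u, w⟫ - t * ⟪v, w⟫
          = (t / γn) * (⟪u, w⟫ * γm - ⟪v, w⟫ * γn) := by field_simp
      rw [this]
      exact mul_nonneg (div_nonneg ht0 hn.le) (by linarith [h1])
    nlinarith [sq_nonneg ‖s • u - t • v‖, hw]
  · intro h
    by_contra hlt
    push_neg at hlt
    set d : H := γn⁻¹ • u - γm⁻¹ • v with hd
    have hwd : ⟪w, d⟫ = ⟪u, w⟫ / γn - ⟪v, w⟫ / γm := by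
      rw [hd, inner_sub_right, real_inner_smul_right, real_inner_smul_right,
        real_inner_comm w u, real_inner_comm w v]
      ring
    have hwdneg : ⟪w, d⟫ < 0 := by rw [hwd]; linarith
    have hdne : d ≠ 0 := by
      intro h0
      rw [h0, inner_zero_right] at hwdneg
      exact lt_irrefl 0 hwdneg
    have hdnorm : 0 < ‖d‖ ^ 2 := pow_pos (norm_pos_iff.mpr hdne) 2
    set c : ℝ := min (min γn γm) (-⟪w, d⟫ / ‖d‖ ^ 2) with hc
    have hc0 : 0 < c := by
      apply lt_min (lt_min hn hm)
      apply div_pos (by linarith) hdnorm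
    have hcn : c ≤ γn := le_trans (min_le_left _ _) (min_le_left _ _)
    have hcm : c ≤ γm := le_trans (min_le_left _ _) (min_le_right _ _)
    have hckey : c ≤ -⟪w, d⟫ / ‖d‖ ^ 2 := min_le_right _ _
    have hsmem : c / γn ∈ Set.Icc (0:ℝ) 1 :=
      ⟨div_nonneg hc0.le hn.le, by rw [div_le_one hn]; exact hcn⟩
    have htmem : c / γm ∈ Set.Icc (0:ℝ) 1 :=
      ⟨div_nonneg hc0.le hm.le, by rw [div_le_one hm]; exact hcm⟩
    have hst : c / γn * γn = c / γm * γm := by field_simp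
    have hsub : (c / γn) • u - (c / γm) • v = c • d := by
      rw [hd, smul_sub, smul_smul, smul_smul, div_eq_mul_inv, div_eq_mul_inv]
    have hle := h (c / γn) (c / γm) hsmem htmem hst
    rw [hsub] at hle
    have hsq : ‖w‖ ^ 2 ≤ ‖w + c • d‖ ^ 2 :=
      pow_le_pow_left₀ (norm_nonneg _) hle 2
    have hexp : ‖w + c • d‖ ^ 2 = ‖w‖ ^ 2 + 2 * c * ⟪w, d⟫ + c ^ 2 * ‖d‖ ^ 2 := by
      rw [norm_add_sq_real, real_inner_smul_right, norm_smul, Real.norm_eq_abs, mul_pow, sq_abs]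
      ring
    rw [hexp] at hsq
    have h1 : 0 ≤ 2 * ⟪w, d⟫ + c * ‖d‖ ^ 2 := by
      nlinarith
    have h2 : c * ‖d‖ ^ 2 ≤ -⟪w, d⟫ := by
      rw [le_div_iff₀ hdnorm] at hckey
      linarith
    linarith

theorem stmt12
    {H : Type*} [NormedAddCommGroup H] [InnerProductSpace ℝ H]
    (T : ℕ → H → H) (γ : ℕ → ℝ) (hγ : ∀ n, 0 < γ n) :
    JointlyP2 T γ ↔ JointlyFirmlyNonexpansive T γ := by
  have key : ∀ n m : ℕ, ∀ x y : H,
      (y - T n x = (y - T m y) - (T n x - T m y)) ∧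
      (x - T m y = (x - T n x) + (T n x - T m y)) := by
    intro n m x y; constructor <;> abel
  constructor
  · intro hP2 n m x y α β hα hβ hE
    set u := x - T n x with hu
    set v := y - T m y with hv
    set w := T n x - T m y with hw
    have hinner : ⟪v, w⟫ / γ m ≤ ⟪u, w⟫ / γ n := by
      have hp := hP2 n m x y
      rw [(key n m x y).1, (key n m x y).2, ← hu, ← hv, ← hw] at hp
      rw [norm_sub_sq_real v w, norm_add_sq_real u w] at hp
      have e1 : (1 / γ m) * (‖w‖ ^ 2 + ‖v‖ ^ 2 - (‖v‖ ^ 2 - 2 * ⟪v, w⟫ + ‖w‖ ^ 2))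
          = 2 * (⟪v, w⟫ / γ m) := by ring
      have e2 : (1 / γ n) * (‖u‖ ^ 2 + 2 * ⟪u, w⟫ + ‖w‖ ^ 2 - ‖u‖ ^ 2 - ‖w‖ ^ 2)
          = 2 * (⟪u, w⟫ / γ n) := by ring
      rw [e1, e2] at hp
      linarith
    have := (core_iff (γ n) (γ m) (hγ n) (hγ m) u v w).mp hinner (1 - α) (1 - β)
      ⟨by linarith [hα.2], by linarith [hα.1]⟩
      ⟨by linarith [hβ.2], by linarith [hβ.1]⟩ hE
    have hrw : ((1 - α) • x + α • T n x) - ((1 - β) • y + β • T m y)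
        = w + ((1 - α) • u - (1 - β) • v) := by
      rw [hu, hv, hw]; module
    rw [hrw]
    exact this
  · intro hF n m x y
    set u := x - T n x with hu
    set v := y - T m y with hv
    set w := T n x - T m y with hw
    have hinner : ⟪v, w⟫ / γ m ≤ ⟪u, w⟫ / γ n := by
      apply (core_iff (γ n) (γ m) (hγ n) (hγ m) u v w).mpr
      intro s t hs ht hst
      have hF' := hF n m x y (1 - s) (1 - t)
        ⟨by linarith [hs.2], by linarith [hs.1]⟩
        ⟨by linarith [ht.2], by linarith [ht.1]⟩
        (by simpa using hst)
      have hrw : ((1 - (1 - s)) • x + (1 - s) • T n x) - ((1 - (1 - t)) • y + (1 - t) • T m y)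
          = w + (s • u - t • v) := by
        rw [hu, hv, hw]; module
      rw [hrw] at hF'
      exact hF'
    rw [(key n m x y).1, (key n m x y).2, ← hu, ← hv, ← hw]
    rw [norm_sub_sq_real v w, norm_add_sq_real u w]
    have e1 : (1 / γ m) * (‖w‖ ^ 2 + ‖v‖ ^ 2 - (‖v‖ ^ 2 - 2 * ⟪v, w⟫ + ‖w‖ ^ 2))
        = 2 * (⟪v, w⟫ / γ m) := by ring
    have e2 : (1 / γ n) * (‖u‖ ^ 2 + 2 * ⟪u, w⟫ + ‖w‖ ^ 2 - ‖u‖ ^ 2 - ‖w‖ ^ 2)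
        = 2 * (⟪u, w⟫ / γ n) := by ring
    rw [e1, e2]
    linarith
end

section
/- Let H be a real Hilbert space, (γ_n) a sequence of positive reals, and (T_n) a family of self-maps of H that is jointly (P₂) with respect to (γ_n). Let x ∈ H and let (x_n) be the proximal-point iteration starting at x. Then the sequence (‖x_n − x_{n+1}‖/γ_n) is nonincreasing, i.e. ‖x_{n+1} − x_{n+2}‖/γ_{n+1} ≤ ‖x_n − x_{n+1}‖/γ_n for all n ∈ ℕ. -/
theorem stmt14
    {H : Type*} [NormedAddCommGroup H] [InnerProductSpace ℝ H]
    (γ : ℕ → ℝ) (hγ : ∀ n, 0 < γ n)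
    (T : ℕ → H → H) (hJP2 : JointlyP2 T γ)
    (x₀ : H) (x : ℕ → H) (hx0 : x 0 = x₀) (hx : ∀ n, x (n + 1) = T n (x n)) :
    ∀ n : ℕ, ‖x (n + 1) - x (n + 2)‖ / γ (n + 1) ≤ ‖x n - x (n + 1)‖ / γ n := by
  intro n
  have h := hJP2 n (n + 1) (x n) (x (n + 1))
  rw [← hx n, ← hx (n + 1)] at h
  set a := ‖x (n + 1) - x (n + 2)‖ with ha
  set b := ‖x n - x (n + 1)‖ with hb
  have ha0 : 0 ≤ a := norm_nonneg _
  have hb0 : 0 ≤ b := norm_nonneg _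
  have htri : ‖x n - x (n + 2)‖ ≤ b + a := by
    calc ‖x n - x (n + 2)‖ = ‖(x n - x (n + 1)) + (x (n + 1) - x (n + 2))‖ := by
          abel_nf
      _ ≤ b + a := norm_add_le _ _
  have htri2 : ‖x n - x (n + 2)‖ ^ 2 ≤ (b + a) ^ 2 :=
    pow_le_pow_left₀ (norm_nonneg _) htri 2
  -- simplify h
  have hself : ‖x (n + 1) - x (n + 1)‖ = 0 := by simp
  rw [hself] at h
  have hg0 := hγ n
  have hg1 := hγ (n + 1)
  -- from h: (1/γ(n+1)) * (2a²) ≤ (1/γ n) * (‖x n - x(n+2)‖² - b² - a²)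
  have key : (1 / γ (n + 1)) * (2 * a ^ 2) ≤ (1 / γ n) * (2 * (b * a)) := by
    have h1 : (1 / γ (n + 1)) * (2 * a ^ 2) ≤
        (1 / γ n) * (‖x n - x (n + 2)‖ ^ 2 - b ^ 2 - a ^ 2) := by
      nlinarith [h]
    have h2 : ‖x n - x (n + 2)‖ ^ 2 - b ^ 2 - a ^ 2 ≤ 2 * (b * a) := by
      nlinarith [htri2]
    calc (1 / γ (n + 1)) * (2 * a ^ 2) ≤
        (1 / γ n) * (‖x n - x (n + 2)‖ ^ 2 - b ^ 2 - a ^ 2) := h1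
      _ ≤ (1 / γ n) * (2 * (b * a)) := by
          apply mul_le_mul_of_nonneg_left h2 (by positivity)
  have key' : a ^ 2 * γ n ≤ b * a * γ (n + 1) := by
    rw [div_mul_eq_mul_div, div_mul_eq_mul_div, div_le_div_iff₀ hg1 hg0] at key
    nlinarith [key]
  rcases eq_or_lt_of_le ha0 with hz | hpos
  · rw [← hz, zero_div]
    positivity
  · rw [div_le_div_iff₀ hg1 hg0]
    nlinarith [key', hpos, mul_pos hpos hg0]
end

section
/- Let H be a real Hilbert space, f : H → ℝ a convex function, (γ_n) a sequence of positive reals, and for each n let J_n : H → H be a proximal mapping of f of order γ_n. Then the family (J_n) is jointly firmly nonexpansive with respect to (γ_n). -/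
local notation "⟪" x ", " y "⟫" => @inner ℝ _ _ x y
lemma prox_subgrad {H : Type*} [NormedAddCommGroup H] [InnerProductSpace ℝ H]
    (f : H → ℝ) (hconv : ConvexOn ℝ Set.univ f)
    (γ : ℝ) (hγ : 0 < γ) (x u : H)
    (hprox : ∀ y : H, f u + (1 / (2 * γ)) * ‖x - u‖ ^ 2 ≤ f y + (1 / (2 * γ)) * ‖x - y‖ ^ 2)
    (v : H) : ⟪x - u, v - u⟫ ≤ γ * (f v - f u) := by
  set I : ℝ := ⟪x - u, v - u⟫ with hI
  set N : ℝ := ‖v - u‖ ^ 2 with hN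
  have hN0 : 0 ≤ N := sq_nonneg _
  have step : ∀ t : ℝ, 0 < t → t ≤ 1 → I ≤ γ * (f v - f u) + t * N / 2 := by
    intro t ht ht1
    have hc := hconv.2 (Set.mem_univ u) (Set.mem_univ v)
      (by linarith : (0:ℝ) ≤ 1 - t) ht.le (by ring)
    have hp := hprox ((1 - t) • u + t • v)
    have hexp : ‖x - ((1 - t) • u + t • v)‖ ^ 2
        = ‖x - u‖ ^ 2 - 2 * t * I + t ^ 2 * N := by
      have h1 : x - ((1 - t) • u + t • v) = (x - u) - t • (v - u) := by
        module
      rw [h1, norm_sub_sq_real, real_inner_smul_right, norm_smul]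
      simp [abs_of_pos ht, hI, hN]
      ring
    rw [hexp] at hp
    have h2γ : (0:ℝ) < 2 * γ := by linarith
    have key1 : 2 * t * I - t ^ 2 * N ≤ 2 * γ * (t * (f v - f u)) := by
      have h3 : (1 / (2 * γ)) * (2 * t * I - t ^ 2 * N)
          ≤ t * (f v - f u) := by
        have h4 : f ((1 - t) • u + t • v) ≤ (1 - t) * f u + t * f v := hc
        nlinarith [hp]
      calc 2 * t * I - t ^ 2 * N
          = (2 * γ) * ((1 / (2 * γ)) * (2 * t * I - t ^ 2 * N)) := by
            field_simp
        _ ≤ (2 * γ) * (t * (f v - f u)) :=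
            mul_le_mul_of_nonneg_left h3 h2γ.le
    have key2 : 2 * I - t * N ≤ 2 * γ * (f v - f u) := by
      have : t * (2 * I - t * N) ≤ t * (2 * γ * (f v - f u)) := by nlinarith [key1]
      exact le_of_mul_le_mul_left this ht
    linarith
  refine le_of_forall_pos_le_add ?_
  intro ε hε
  have htpos : 0 < min 1 (2 * ε / (N + 1)) := by
    apply lt_min one_pos
    positivity
  have h := step (min 1 (2 * ε / (N + 1))) htpos (min_le_left _ _)
  have hle : min 1 (2 * ε / (N + 1)) * N / 2 ≤ ε := by
    have h1 : min 1 (2 * ε / (N + 1)) ≤ 2 * ε / (N + 1) := min_le_right _ _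
    have h2 : (0:ℝ) < N + 1 := by linarith
    rw [le_div_iff₀ h2] at h1
    nlinarith [htpos, hN0]
  linarith

theorem stmt15
    {H : Type*} [NormedAddCommGroup H] [InnerProductSpace ℝ H]
    (f : H → ℝ) (hconv : ConvexOn ℝ Set.univ f)
    (γ : ℕ → ℝ) (hγ : ∀ n, 0 < γ n)
    (J : ℕ → H → H)
    (hJ : ∀ n, ∀ x y : H,
      f (J n x) + (1 / (2 * γ n)) * ‖x - J n x‖ ^ 2 ≤ f y + (1 / (2 * γ n)) * ‖x - y‖ ^ 2) :
    JointlyFirmlyNonexpansive J γ := by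
  intro n m x y α β hα hβ hrel
  set u := J n x with hu
  set v := J m y with hv
  have h1 : ⟪x - u, v - u⟫ ≤ γ n * (f v - f u) :=
    prox_subgrad f hconv (γ n) (hγ n) x u (hJ n x) v
  have h2 : ⟪y - v, u - v⟫ ≤ γ m * (f u - f v) :=
    prox_subgrad f hconv (γ m) (hγ m) y v (hJ m y) u
  obtain ⟨hα0, hα1⟩ := hα
  obtain ⟨hβ0, hβ1⟩ := hβ
  have hα' : (0:ℝ) ≤ 1 - α := by linarith
  have hβ' : (0:ℝ) ≤ 1 - β := by linarith
  set w : H := (1 - α) • (x - u) - (1 - β) • (y - v) with hw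
  have hwuv : 0 ≤ ⟪w, u - v⟫ := by
    have e1 : ⟪w, u - v⟫
        = -((1 - α) * ⟪x - u, v - u⟫) - (1 - β) * ⟪y - v, u - v⟫ := by
      rw [hw, inner_sub_left, real_inner_smul_left, real_inner_smul_left]
      have : ⟪x - u, u - v⟫ = -⟪x - u, v - u⟫ := by
        rw [← inner_neg_right]; congr 1; abel
      rw [this]; ring
    rw [e1]
    have m1 : (1 - α) * ⟪x - u, v - u⟫ ≤ (1 - α) * (γ n * (f v - f u)) :=
      mul_le_mul_of_nonneg_left h1 hα'
    have m2 : (1 - β) * ⟪y - v, u - v⟫ ≤ (1 - β) * (γ m * (f u - f v)) :=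
      mul_le_mul_of_nonneg_left h2 hβ'
    have e2 : (1 - α) * (γ n * (f v - f u)) + (1 - β) * (γ m * (f u - f v)) = 0 := by
      linear_combination (f v - f u) * hrel
    linarith
  have hdecomp : ((1 - α) • x + α • u) - ((1 - β) • y + β • v) = (u - v) + w := by
    rw [hw]
    module
  rw [hdecomp]
  have hsq : ‖u - v‖ ^ 2 ≤ ‖(u - v) + w‖ ^ 2 := by
    rw [norm_add_sq_real]
    have hc : ⟪u - v, w⟫ = ⟪w, u - v⟫ := real_inner_comm _ _
    rw [hc]
    nlinarith [sq_nonneg ‖w‖]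
  exact (pow_le_pow_iff_left₀ (norm_nonneg _) (norm_nonneg _) two_ne_zero).mp hsq
end

section
/- Let H be a real Hilbert space, T : H → H a nonexpansive mapping, (γ_n) a sequence of positive reals, and for each n let R_n : H → H satisfy R_n x = (1/(1+γ_n))·x + (γ_n/(1+γ_n))·T(R_n x) for all x ∈ H. Then the family (R_n) is jointly firmly nonexpansive with respect to (γ_n). -/
lemma aux16 {H : Type*} [NormedAddCommGroup H] [InnerProductSpace ℝ H]
    (u v : H) (l : ℝ) (hl : 0 ≤ l) (h : ‖v‖ ≤ ‖u‖) :
    ‖u‖ ≤ ‖u + l • (u - v)‖ := by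
  have h2 : ‖u‖ ^ 2 ≤ ‖u + l • (u - v)‖ ^ 2 := by
    rw [norm_add_sq_real, real_inner_smul_right, inner_sub_right,
      real_inner_self_eq_norm_sq]
    have h3 := real_inner_le_norm u v
    have h4 : 0 ≤ l * (‖u‖ ^ 2 - inner ℝ u v) := by
      apply mul_nonneg hl
      nlinarith [norm_nonneg v, norm_nonneg u]
    nlinarith [sq_nonneg ‖l • (u - v)‖]
  nlinarith [norm_nonneg (u + l • (u - v)), norm_nonneg u]

lemma resolv16 {H : Type*} [NormedAddCommGroup H] [InnerProductSpace ℝ H]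
    (g : ℝ) (hg : 0 < g) (a x : H) (t : H)
    (h : a = (1 / (1 + g)) • x + (g / (1 + g)) • t) :
    x = (1 + g) • a - g • t := by
  have hne : (1 : ℝ) + g ≠ 0 := by positivity
  rw [h, smul_add, smul_smul, smul_smul]
  rw [show (1 + g) * (1 / (1 + g)) = 1 by field_simp,
    show (1 + g) * (g / (1 + g)) = g by field_simp, one_smul]
  abel

theorem stmt16
    {H : Type*} [NormedAddCommGroup H] [InnerProductSpace ℝ H]
    (T : H → H) (hT : ∀ x y : H, ‖T x - T y‖ ≤ ‖x - y‖)
    (γ : ℕ → ℝ) (hγ : ∀ n, 0 < γ n)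
    (R : ℕ → H → H)
    (hR : ∀ n, ∀ x : H,
      R n x = (1 / (1 + γ n)) • x + (γ n / (1 + γ n)) • T (R n x)) :
    JointlyFirmlyNonexpansive R γ := by
  intro n m x y α β hα hβ hαβ
  obtain ⟨hα0, hα1⟩ := hα
  obtain ⟨hβ0, hβ1⟩ := hβ
  set a := R n x with ha
  set b := R m y with hb
  have hxa : x = (1 + γ n) • a - γ n • T a := resolv16 (γ n) (hγ n) a x (T a) (hR n x)
  have hyb : y = (1 + γ m) • b - γ m • T b := resolv16 (γ m) (hγ m) b y (T b) (hR m y)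
  have hl0 : 0 ≤ (1 - α) * γ n := mul_nonneg (by linarith) (hγ n).le
  have e1 : ((1 - α) • x + α • a) - ((1 - β) • y + β • b)
      = (a - b) + ((1 - α) * γ n) • ((a - b) - (T a - T b)) := by
    rw [hxa, hyb]
    match_scalars <;> linarith [hαβ]
  rw [e1]
  exact aux16 (a - b) (T a - T b) ((1 - α) * γ n) hl0 (hT a b)
end

section
/- Let H be a real Hilbert space, A : H → 2^H a monotone set-valued operator, (γ_n) a sequence of positive reals, and for each n let J_n : H → H be a resolvent of A of order γ_n. Then the family (J_n) is jointly firmly nonexpansive with respect to (γ_n). -/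
open RealInnerProductSpace

theorem stmt17
    {H : Type*} [NormedAddCommGroup H] [InnerProductSpace ℝ H]
    (A : H → Set H)
    (hmono : ∀ x y u v : H, u ∈ A x → v ∈ A y → 0 ≤ ⟪x - y, u - v⟫)
    (γ : ℕ → ℝ) (hγ : ∀ n, 0 < γ n)
    (J : ℕ → H → H)
    (hJ : ∀ n, ∀ x : H, (1 / γ n) • (x - J n x) ∈ A (J n x)) :
    JointlyFirmlyNonexpansive J γ := by
  intro n m x y α β hα hβ hαβ
  set p := J n x
  set q := J m y
  set u := (1 / γ n) • (x - p)
  set v := (1 / γ m) • (y - q)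
  have hin : 0 ≤ ⟪p - q, u - v⟫ := hmono _ _ _ _ (hJ n x) (hJ m y)
  set c := (1 - α) * γ n with hc
  have hc0 : 0 ≤ c := mul_nonneg (by linarith [hα.2]) (hγ n).le
  have hw : ((1 - α) • x + α • p) - ((1 - β) • y + β • q) = (p - q) + c • (u - v) := by
    have h1 : (1 - α) • x + α • p = (p : H) + (1 - α) • (x - p) := by
      rw [smul_sub]; module
    have h2 : (1 - β) • y + β • q = (q : H) + (1 - β) • (y - q) := by
      rw [smul_sub]; module
    have e3 : c * (1 / γ n) = 1 - α := by
      rw [hc]; field_simp [(hγ n).ne']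
    have e4 : c * (1 / γ m) = 1 - β := by
      rw [hαβ]; field_simp [(hγ m).ne']
    have h3 : (1 - α) • (x - p) = c • u := by
      show _ = c • ((1 / γ n) • (x - p)); rw [smul_smul, e3]
    have h4 : (1 - β) • (y - q) = c • v := by
      show _ = c • ((1 / γ m) • (y - q)); rw [smul_smul, e4]
    rw [h1, h2, h3, h4, smul_sub]
    abel
  rw [hw]
  rw [← Real.sqrt_sq (norm_nonneg (p - q + c • (u - v))), ← Real.sqrt_sq (norm_nonneg (p - q))]
  apply Real.sqrt_le_sqrt
  rw [@norm_add_sq_real]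
  have : 0 ≤ ⟪p - q, c • (u - v)⟫ := by
    rw [real_inner_smul_right]
    positivity
  nlinarith [sq_nonneg ‖c • (u - v)‖]
end

section
/- Let H be a real Hilbert space, C ⊆ H nonempty, φ : [0,∞) → [0,∞) nondecreasing with φ(t) = 0 iff t = 0, and T : H → H uniformly (P₂) on C with modulus φ. Then T is uniformly firmly nonexpansive on C with the same modulus φ, i.e. T(C) ⊆ C and for all x, y ∈ C and t ∈ [0,1]: ‖Tx − Ty‖² ≤ ‖((1−t)x + tTx) − ((1−t)y + tTy)‖² − 2(1−t)·φ(‖Tx − Ty‖). -/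
open scoped RealInnerProductSpace


theorem stmt19
    {H : Type*} [NormedAddCommGroup H] [InnerProductSpace ℝ H]
    (C : Set H) (hCne : C.Nonempty)
    (φ : ℝ → ℝ) (hφmono : ∀ s t : ℝ, 0 ≤ s → s ≤ t → φ s ≤ φ t)
    (hφnonneg : ∀ t : ℝ, 0 ≤ t → 0 ≤ φ t)
    (hφzero : ∀ t : ℝ, 0 ≤ t → (φ t = 0 ↔ t = 0))
    (T : H → H) (hTC : Set.MapsTo T C C)
    (hUP2 : ∀ x ∈ C, ∀ y ∈ C, 2 * ‖T x - T y‖ ^ 2 ≤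
      ‖x - T y‖ ^ 2 + ‖y - T x‖ ^ 2 - ‖x - T x‖ ^ 2 - ‖y - T y‖ ^ 2
        - 2 * φ ‖T x - T y‖) :
    Set.MapsTo T C C ∧
    ∀ x ∈ C, ∀ y ∈ C, ∀ t ∈ Set.Icc (0 : ℝ) 1,
      ‖T x - T y‖ ^ 2 ≤
        ‖((1 - t) • x + t • T x) - ((1 - t) • y + t • T y)‖ ^ 2
          - 2 * (1 - t) * φ ‖T x - T y‖ := by
  refine ⟨hTC, ?_⟩
  intro x hx y hy t ht
  obtain ⟨ht0, ht1⟩ := ht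
  have key := hUP2 x hx y hy
  set b := T x - T y with hb
  set w := (x - y) - b with hw
  -- From (P₂): φ ‖b‖ ≤ ⟪w, b⟫
  have h1 : φ ‖b‖ ≤ ⟪w, b⟫ := by
    have e1 : x - T y = (x - T x) + b := by rw [hb]; abel
    have e2 : y - T x = (y - T y) - b := by rw [hb]; abel
    rw [e1, e2] at key
    have n1 : ‖(x - T x) + b‖ ^ 2 =
        ‖x - T x‖ ^ 2 + 2 * ⟪x - T x, b⟫ + ‖b‖ ^ 2 := by
      rw [norm_add_sq_real]
    have n2 : ‖(y - T y) - b‖ ^ 2 =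
        ‖y - T y‖ ^ 2 - 2 * ⟪y - T y, b⟫ + ‖b‖ ^ 2 := by
      rw [norm_sub_sq_real]
    have e3 : w = (x - T x) - (y - T y) := by rw [hw, hb]; abel
    have n3 : ⟪w, b⟫ = ⟪x - T x, b⟫ - ⟪y - T y, b⟫ := by
      rw [e3, inner_sub_left]
    linarith
  -- rewrite the convex combination
  have e4 : ((1 - t) • x + t • T x) - ((1 - t) • y + t • T y)
      = b + (1 - t) • w := by
    rw [hw, hb]
    simp only [smul_sub, sub_smul, one_smul]
    abel
  rw [e4, norm_add_sq_real, real_inner_smul_right, norm_smul]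
  have hbw : 0 ≤ ⟪w, b⟫ := le_trans (hφnonneg _ (norm_nonneg _)) h1
  have hsym : ⟪b, w⟫ = ⟪w, b⟫ := real_inner_comm w b
  have h1t : 0 ≤ 1 - t := by linarith
  have hns : ‖(1 - t)‖ = 1 - t := abs_of_nonneg h1t
  rw [hsym, hns]
  nlinarith [sq_nonneg ((1 - t) * ‖w‖), h1, norm_nonneg w]
end
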